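/- arXiv:2601.18370 — 5 statements merged into one kernel-verified Lean document; each statement's English description precedes it below -/
import Mathlib

section
/- In the semidirect-product setup G = F ⋊ ⟨τ⟩ with subsets X2, X4 ⊆ G built from an ordering A_0, ..., A_{l−1} of the F_q-hyperplanes of F such that S = ⋃_{i=0}^{l−1}(F\A_i)τ^i is inverse-closed in G, the set D = X2 ∪ X4 = S is a reversible identity-free divisible difference set in G relative to the subgroup F with parameters m = l = (q^r−1)/(q−1), n = q^r, k = q^{r−1}(q^r−1), λ1 = q^{r−1}(q^r−q^{r−1}−1), λ2 = q^{r−2}(q−1)(q^r−1); equivalently, Cay(G, X2 ∪ X4) is a proper divisible design graph with parameters (q^r·l, q^{r−1}(q^r−1), q^{r−1}(q^r−q^{r−1}−1), q^{r−2}(q−1)(q^r−1), l, q^r) whose canonical partition is into the cosets of F in G. -/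
open Classical Finset

section Aux

variable {K F : Type*} [Field K] [Field F] [Algebra K F]

/-- multiplication by a unit, as a `K`-linear equivalence. -/
noncomputable def mulUnitLE (u : Fˣ) : F ≃ₗ[K] F where
  toFun y := (u : F) * y
  invFun y := ((u⁻¹ : Fˣ) : F) * y
  map_add' := mul_add _
  map_smul' k y := mul_smul_comm k _ y
  left_inv y := by simp
  right_inv y := by simp

noncomputable def uS (u : Fˣ) (W : Submodule K F) : Submodule K F :=
  W.map ((mulUnitLE u : F ≃ₗ[K] F) : F →ₗ[K] F)

lemma mem_uS {u : Fˣ} {W : Submodule K F} {z : F} :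
    z ∈ uS (K := K) u W ↔ ((u⁻¹ : Fˣ) : F) * z ∈ W := by
  constructor
  · rintro ⟨w, hw, rfl⟩
    simpa [mulUnitLE, mul_assoc, ← Units.val_mul] using hw
  · intro h
    exact ⟨_, h, by simp [mulUnitLE, mul_assoc, ← mul_assoc, ← Units.val_mul]⟩

lemma uS_uS (u v : Fˣ) (W : Submodule K F) :
    uS (K := K) u (uS (K := K) v W) = uS (u * v) W := by
  ext z
  simp only [mem_uS]
  have : ((v⁻¹ : Fˣ) : F) * (((u⁻¹ : Fˣ) : F) * z) = (((u*v)⁻¹ : Fˣ) : F) * z := by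
    push_cast
    ring
  rw [this]

lemma uS_one (W : Submodule K F) : uS (K := K) 1 W = W := by
  ext z; simp [mem_uS]

lemma finrank_uS (u : Fˣ) (W : Submodule K F) :
    Module.finrank K (uS (K := K) u W) = Module.finrank K W :=
  LinearEquiv.finrank_map_eq _ _

end Aux

lemma IE_count {α : Type*} [Fintype α] (s t : Set α) :
    (sᶜ ∩ tᶜ).ncard + s.ncard + t.ncard = Fintype.card α + (s ∩ t).ncard := by
  have h1 := Set.ncard_add_ncard_compl (s ∪ t)
  have h2 := Set.ncard_union_add_ncard_inter s t
  rw [Set.compl_union] at h1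
  rw [Nat.card_eq_fintype_card] at h1
  omega

lemma ncard_submodule {K F : Type*} [Field K] [Field F] [Algebra K F]
    [Fintype K] [Fintype F] (q : ℕ) (hK : Fintype.card K = q) (V : Submodule K F) :
    (V : Set F).ncard = q ^ Module.finrank K V := by
  have h : (V : Set F).ncard = Nat.card V := by
    rw [← Nat.card_coe_set_eq]
    rfl
  rw [h, Nat.card_eq_fintype_card, Module.card_eq_pow_finrank (K := K), hK]

section Count

variable {K F : Type*} [Field K] [Field F] [Algebra K F] [Fintype K] [Fintype F]
variable {q r : ℕ}

lemma count_main (V W : Submodule K F) (x : F) :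
    {y : F | y ∉ V ∧ x + y ∉ W}.ncard + (V : Set F).ncard + (W : Set F).ncard
      = Fintype.card F + {y : F | y ∈ V ∧ x + y ∈ W}.ncard := by
  have key := IE_count (V : Set F) {y : F | x + y ∈ W}
  have ht : {y : F | x + y ∈ W}.ncard = (W : Set F).ncard := by
    have himg : {y : F | x + y ∈ W} = (fun w => w - x) '' (W : Set F) := by
      ext y
      constructor
      · intro hy
        exact ⟨x + y, hy, by ring⟩
      · rintro ⟨w, hw, rfl⟩
        simpa [Set.mem_setOf_eq] using hw
    rw [himg, Set.ncard_image_of_injective]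
    intro a b h
    have := congrArg (· + x) h
    simpa using this
  have hc : (V : Set F)ᶜ ∩ {y : F | x + y ∈ W}ᶜ = {y : F | y ∉ V ∧ x + y ∉ W} := by
    ext y; simp [Set.mem_setOf_eq]
  have hi : (V : Set F) ∩ {y : F | x + y ∈ W} = {y : F | y ∈ V ∧ x + y ∈ W} := by
    ext y; simp [Set.mem_setOf_eq]
  rw [hc, hi, ht] at key
  exact key

lemma inter_same_mem (V : Submodule K F) {x : F} (hx : x ∈ V) :
    {y : F | y ∈ V ∧ x + y ∈ V} = (V : Set F) := by
  ext y
  simp only [Set.mem_setOf_eq, SetLike.mem_coe]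
  exact ⟨fun h => h.1, fun h => ⟨h, V.add_mem hx h⟩⟩

lemma inter_same_not (V : Submodule K F) {x : F} (hx : x ∉ V) :
    {y : F | y ∈ V ∧ x + y ∈ V} = (∅ : Set F) := by
  ext y
  simp only [Set.mem_setOf_eq, Set.mem_empty_iff_false, iff_false, not_and]
  intro hy hxy
  exact hx (by simpa using V.sub_mem hxy hy)

lemma inter_distinct (hK : Fintype.card K = q) (hrank : Module.finrank K F = r)
    (hr : 2 ≤ r) (V W : Submodule K F)
    (hV : Module.finrank K V = r - 1) (hW : Module.finrank K W = r - 1)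
    (hVW : V ≠ W) (x : F) :
    {y : F | y ∈ V ∧ x + y ∈ W}.ncard = q ^ (r - 2) := by
  haveI : Module.Finite K F := Module.Finite.of_finite
  have hsup : V ⊔ W = ⊤ := by
    have h1 : Module.finrank K ↥(V ⊔ W) ≤ r := hrank ▸ Submodule.finrank_le _
    have h2 : r - 1 ≤ Module.finrank K ↥(V ⊔ W) :=
      hV ▸ Submodule.finrank_mono le_sup_left
    by_cases h : Module.finrank K ↥(V ⊔ W) = r
    · exact Submodule.eq_top_of_finrank_eq (by rw [h, hrank])
    · exfalso
      have h3 : Module.finrank K ↥(V ⊔ W) = r - 1 := by omega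
      have hVeq : V = V ⊔ W :=
        Submodule.eq_of_le_of_finrank_eq le_sup_left (by rw [hV, h3])
      have hWeq : W = V ⊔ W :=
        Submodule.eq_of_le_of_finrank_eq le_sup_right (by rw [hW, h3])
      exact hVW (hVeq.trans hWeq.symm)
  have hinf : Module.finrank K ↥(V ⊓ W) = r - 2 := by
    have h4 := Submodule.finrank_sup_add_finrank_inf_eq V W
    rw [hV, hW, hsup, finrank_top] at h4
    rw [hrank] at h4
    omega
  obtain ⟨v, hv, w, hw, hvw⟩ := Submodule.mem_sup.mp
    (show x ∈ V ⊔ W by rw [hsup]; exact Submodule.mem_top)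
  have himg : {y : F | y ∈ V ∧ x + y ∈ W} = (fun z => z - v) '' ((V ⊓ W : Submodule K F) : Set F) := by
    ext y
    constructor
    · rintro ⟨hyV, hyW⟩
      refine ⟨y + v, ?_, by ring⟩
      have hmem : y + v ∈ W := by
        have heq : y + v = (x + y) - w := by rw [← hvw]; ring
        exact heq ▸ W.sub_mem hyW hw
      exact Submodule.mem_inf.mpr ⟨V.add_mem hyV hv, hmem⟩
    · rintro ⟨z, hz, rfl⟩
      obtain ⟨hzV, hzW⟩ := Submodule.mem_inf.mp hz
      refine ⟨V.sub_mem hzV hv, ?_⟩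
      have heq : x + (z - v) = w + z := by rw [← hvw]; ring
      exact heq ▸ W.add_mem hw hzW
  rw [himg, Set.ncard_image_of_injective, ← hinf, ncard_submodule q hK]
  intro a b h
  have := congrArg (· + v) h
  simpa using this

end Count

set_option linter.unusedSectionVars false

section Hyp

variable {K F : Type*} [Field K] [Field F] [Algebra K F] [Fintype K] [Fintype F]
  [DecidableEq F] {q r l : ℕ} {A : Fin l → Submodule K F}

lemma filter_card_smul (hA : ∀ i : Fin l, Module.finrank K (A i) = r - 1)
    (hAinj : Function.Injective A)
    (hAall : ∀ W : Submodule K F, Module.finrank K W = r - 1 → ∃ i, A i = W)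
    (u : Fˣ) (z : F) :
    (Finset.univ.filter fun i : Fin l => z ∈ A i).card
      = (Finset.univ.filter fun i : Fin l => (u : F) * z ∈ A i).card := by
  classical
  have hrk : ∀ i, Module.finrank K ↥(uS (K := K) u (A i)) = r - 1 := fun i => by
    rw [finrank_uS, hA]
  set π : Fin l → Fin l := fun i => (hAall _ (hrk i)).choose with hπdef
  have hπ : ∀ i, A (π i) = uS (K := K) u (A i) := fun i => (hAall _ (hrk i)).choose_spec
  have huu : ∀ y : F, ((u⁻¹ : Fˣ) : F) * ((u : F) * y) = y := by
    intro y
    rw [← mul_assoc, ← Units.val_mul, inv_mul_cancel, Units.val_one, one_mul]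
  have hπinj : Function.Injective π := by
    intro i j hij
    apply hAinj
    have h1 : uS (K := K) u (A i) = uS (K := K) u (A j) := by
      rw [← hπ, ← hπ, hij]
    have h2 := congrArg (uS (K := K) u⁻¹) h1
    rwa [uS_uS, uS_uS, inv_mul_cancel, uS_one, uS_one] at h2
  have hmem : ∀ i, (z ∈ A i ↔ (u : F) * z ∈ A (π i)) := by
    intro i
    rw [hπ i, mem_uS, huu]
  apply Finset.card_bij (fun i _ => π i)
  · intro i hi
    simp only [Finset.mem_filter, Finset.mem_univ, true_and] at hi ⊢
    exact (hmem i).mp hi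
  · intro i _ j _ h
    exact hπinj h
  · intro j hj
    simp only [Finset.mem_filter, Finset.mem_univ, true_and] at hj
    obtain ⟨i, rfl⟩ := (Finite.injective_iff_surjective.mp hπinj) j
    refine ⟨i, by simp only [Finset.mem_filter, Finset.mem_univ, true_and]; exact (hmem i).mpr hj, rfl⟩

end Hyp

section Hyp2

variable {K F : Type*} [Field K] [Field F] [Algebra K F] [Fintype K] [Fintype F]
  [DecidableEq F] {q r l : ℕ} {A : Fin l → Submodule K F}

lemma card_mem_submodule (hK : Fintype.card K = q) (V : Submodule K F) :
    (Finset.univ.filter fun x : F => x ∈ V).card = q ^ Module.finrank K V := by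
  classical
  rw [← Fintype.card_subtype, ← Nat.card_eq_fintype_card]
  have : Nat.card {x : F // x ∈ V} = Nat.card V := rfl
  rw [this, Nat.card_eq_fintype_card, Module.card_eq_pow_finrank (K := K), hK]

lemma hyperplane_count (hK : Fintype.card K = q) (hF : Fintype.card F = q ^ r)
    (hqr : 1 < q ^ r) (hfact : l * (q - 1) = q ^ r - 1)
    (hA : ∀ i : Fin l, Module.finrank K (A i) = r - 1)
    (hAinj : Function.Injective A)
    (hAall : ∀ W : Submodule K F, Module.finrank K W = r - 1 → ∃ i, A i = W)
    {x : F} (hx : x ≠ 0) :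
    (Finset.univ.filter fun i : Fin l => x ∈ A i).card * (q - 1) = q ^ (r - 1) - 1 := by
  classical
  set c : F → ℕ := fun z => (Finset.univ.filter fun i : Fin l => z ∈ A i).card with hc
  have hconst : ∀ z : F, z ≠ 0 → c z = c x := by
    intro z hz
    have h1 : c 1 = c z := by
      have := filter_card_smul (r := r) hA hAinj hAall (Units.mk0 z hz) 1
      simpa [hc] using this
    have h2 : c 1 = c x := by
      have := filter_card_smul (r := r) hA hAinj hAall (Units.mk0 x hx) 1
      simpa [hc] using this
    rw [← h1, h2]
  -- double counting
  have hswap : ∑ z ∈ Finset.univ.filter (fun z : F => z ≠ 0), c z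
      = ∑ i : Fin l, (Finset.univ.filter fun z : F => z ≠ 0 ∧ z ∈ A i).card := by
    have lhs : ∑ z ∈ Finset.univ.filter (fun z : F => z ≠ 0), c z
        = ∑ z : F, ∑ i : Fin l, if z ≠ 0 ∧ z ∈ A i then 1 else 0 := by
      rw [Finset.sum_filter]
      refine Finset.sum_congr rfl fun z _ => ?_
      by_cases hz : z = 0
      · simp [hz]
      · have hcz : c z = (Finset.univ.filter fun i : Fin l => z ∈ A i).card := rfl
        rw [if_pos hz, hcz, Finset.card_filter]
        exact Finset.sum_congr rfl fun i _ => by simp [hz]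
    rw [lhs, Finset.sum_comm]
    refine Finset.sum_congr rfl fun i _ => ?_
    rw [Finset.card_filter]
  have hL : ∑ z ∈ Finset.univ.filter (fun z : F => z ≠ 0), c z = (q ^ r - 1) * c x := by
    rw [Finset.sum_congr rfl fun z hz => hconst z (Finset.mem_filter.mp hz).2,
      Finset.sum_const, smul_eq_mul]
    congr 1
    rw [Finset.filter_ne', Finset.card_erase_of_mem (Finset.mem_univ _), Finset.card_univ, hF]
  have hR : ∀ i : Fin l, (Finset.univ.filter fun z : F => z ≠ 0 ∧ z ∈ A i).card
      = q ^ (r - 1) - 1 := by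
    intro i
    have heq : (Finset.univ.filter fun z : F => z ≠ 0 ∧ z ∈ A i)
        = (Finset.univ.filter fun z : F => z ∈ A i).erase 0 := by
      ext z
      simp [Finset.mem_erase, and_comm]
    rw [heq, Finset.card_erase_of_mem (by simp [Submodule.zero_mem]),
      card_mem_submodule hK, hA]
  have htot : (q ^ r - 1) * c x = l * (q ^ (r - 1) - 1) := by
    rw [← hL, hswap, Finset.sum_congr rfl fun i _ => hR i, Finset.sum_const, smul_eq_mul,
      Finset.card_univ, Fintype.card_fin]
  have hmul : (q ^ r - 1) * (c x * (q - 1)) = (q ^ r - 1) * (q ^ (r - 1) - 1) := by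
    calc (q ^ r - 1) * (c x * (q - 1)) = ((q ^ r - 1) * c x) * (q - 1) := by ring
    _ = (l * (q ^ (r - 1) - 1)) * (q - 1) := by rw [htot]
    _ = (l * (q - 1)) * (q ^ (r - 1) - 1) := by ring
    _ = (q ^ r - 1) * (q ^ (r - 1) - 1) := by rw [hfact]
  exact Nat.eq_of_mul_eq_mul_left (by omega) hmul

end Hyp2

set_option maxHeartbeats 1000000 in
/-- in the setup `G = F ⋊ ⟨τ⟩` with `S` inverse-closed, the set
`D = X2 ∪ X4 = S` is a reversible identity-free divisible difference set in `G`
relative to the subgroup `F` (the range of `ι`) with parameters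
`m = l`, `n = q^r`, `k = q^(r-1)(q^r−1)`, `λ1 = q^(r-1)(q^r−q^(r-1)−1)`,
`λ2 = q^(r-2)(q−1)(q^r−1)`; equivalently `Cay(G, X2 ∪ X4)` is a proper divisible
design graph with parameters `(q^r·l, k, λ1, λ2, l, q^r)` and canonical partition
into the cosets of `F`. -/
theorem ddg_X2_union_X4
    (p e q r l : ℕ) (hp : p.Prime) (he : 1 ≤ e) (hq : q = p ^ e) (hr : 2 ≤ r)
    (hl : l = (q ^ r - 1) / (q - 1)) (hlpos : 0 < l)
    (K F : Type*) [Field K] [Field F] [Algebra K F] [Fintype K] [Fintype F]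
    [DecidableEq F]
    (hcardK : Fintype.card K = q) (hcardF : Fintype.card F = q ^ r)
    (hrank : Module.finrank K F = r)
    (σ : Fˣ) (hσ : ∀ u : Fˣ, u ∈ Subgroup.zpowers σ)
    (τ : Fˣ) (hτ : τ = σ ^ (q - 1))
    (G : Type*) [Group G] [Fintype G]
    (ι : F → G) (hι : ∀ x y : F, ι (x + y) = ι x * ι y)
    (hinj : Function.Injective ι)
    (t : G) (hconj : ∀ x : F, t * ι x * t⁻¹ = ι ((τ : F) * x))
    (horder : orderOf t = l)
    (hcardG : Fintype.card G = q ^ r * l)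
    (hdecomp : ∀ g : G, ∃ (x : F) (i : ℕ), i < l ∧ g = ι x * t ^ i)
    (A : Fin l → Submodule K F)
    (hA : ∀ i, Module.finrank K (A i) = r - 1)
    (hAinj : Function.Injective A)
    (hAall : ∀ W : Submodule K F, Module.finrank K W = r - 1 → ∃ i, A i = W)
    (X2 X4 S : Set G)
    (hX2 : X2 = ι '' ((Set.univ : Set F) \ (A ⟨0, hlpos⟩ : Set F)))
    (hX4 : X4 = {g : G | ∃ i : Fin l, (i : ℕ) ≠ 0 ∧
      ∃ y ∈ ((Set.univ : Set F) \ (A i : Set F)), g = ι y * t ^ (i : ℕ)})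
    (hS : S = {g : G | ∃ i : Fin l,
      ∃ y ∈ ((Set.univ : Set F) \ (A i : Set F)), g = ι y * t ^ (i : ℕ)})
    (hSinv : S⁻¹ = S)
    (k l1 l2 : ℕ)
    (hk : k = q ^ (r - 1) * (q ^ r - 1))
    (hl1 : l1 = q ^ (r - 1) * (q ^ r - q ^ (r - 1) - 1))
    (hl2 : l2 = q ^ (r - 2) * (q - 1) * (q ^ r - 1)) :
    X2 ∪ X4 = S ∧
    (X2 ∪ X4)⁻¹ = X2 ∪ X4 ∧
    (1 : G) ∉ X2 ∪ X4 ∧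
    Nat.card (X2 ∪ X4 : Set G) = k ∧
    Nat.card (Set.range ι) = q ^ r ∧
    (∀ g : G, g ≠ 1 →
      Nat.card {pr : G × G // pr.1 ∈ X2 ∪ X4 ∧ pr.2 ∈ X2 ∪ X4 ∧ pr.1 * pr.2⁻¹ = g}
        = if g ∈ Set.range ι then l1 else l2) ∧
    (∀ g : G, Nat.card {x : G // x * g⁻¹ ∈ X2 ∪ X4} = k) ∧
    (∀ g h : G, g ≠ h →
      Nat.card {x : G // x * g⁻¹ ∈ X2 ∪ X4 ∧ x * h⁻¹ ∈ X2 ∪ X4}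
        = if g * h⁻¹ ∈ Set.range ι then l1 else l2) ∧
    l1 ≠ l2 ∧ 1 < l ∧ 1 < q ^ r := by
  classical
  haveI : NeZero l := ⟨hlpos.ne'⟩
  -- numeric basics
  have hq2 : 2 ≤ q := by
    rw [hq]
    calc 2 ≤ p := hp.two_le
    _ ≤ p ^ e := Nat.le_self_pow (by omega) p
  have hqr1 : 1 < q ^ r := Nat.one_lt_pow (by omega) (by omega)
  have hdvd : (q - 1) ∣ (q ^ r - 1) := by
    simpa using Nat.sub_dvd_pow_sub_pow q 1 r
  have hfact : l * (q - 1) = q ^ r - 1 := by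
    rw [hl]; exact Nat.div_mul_cancel hdvd
  have hpow1 : q ^ (r - 1) * q = q ^ r := by
    rw [← pow_succ]; congr 1; omega
  have hpow2 : q ^ (r - 2) * q = q ^ (r - 1) := by
    rw [← pow_succ]; congr 1; omega
  have hqq : q * q ≤ q ^ r := by
    calc q * q = q ^ 2 := (sq q).symm
    _ ≤ q ^ r := Nat.pow_le_pow_right (by omega) hr
  have hllt : 1 < l := by
    by_contra h
    have hle : l = 1 := by omega
    rw [hle, one_mul] at hfact
    have h2q : 2 * q ≤ q * q := Nat.mul_le_mul_right q hq2
    omega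
  have hqrpos : 0 < q ^ (r - 1) := Nat.pow_pos (by omega)
  have hqr2pos : 0 < q ^ (r - 2) := Nat.pow_pos (by omega)
  have hA1le : q ^ (r - 1) + 1 ≤ q ^ r := by
    have := Nat.mul_le_mul_left (q ^ (r - 1)) hq2
    omega
  -- group basics
  have hι0 : ι 0 = 1 := by
    have h := hι 0 0
    rw [add_zero] at h
    exact (left_eq_mul.mp h)
  have hιneg : ∀ x : F, ι (-x) = (ι x)⁻¹ := by
    intro x
    apply eq_inv_of_mul_eq_one_left
    rw [← hι]
    simp [hι0]
  have horderσ : orderOf σ = q ^ r - 1 := by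
    rw [orderOf_eq_card_of_forall_mem_zpowers hσ, Nat.card_eq_fintype_card,
      Fintype.card_units, hcardF]
  have horderτ : orderOf τ = l := by
    rw [hτ, orderOf_pow, horderσ, Nat.gcd_eq_right hdvd, hl]
  have hconj' : ∀ z : F, t * ι z = ι ((τ : F) * z) * t := by
    intro z
    rw [← hconj z, inv_mul_cancel_right]
  have hconjn : ∀ (n : ℕ) (z : F), t ^ n * ι z = ι ((τ : F) ^ n * z) * t ^ n := by
    intro n
    induction n with
    | zero => intro z; simp
    | succ n ih =>
      intro z
      calc t ^ (n + 1) * ι z = t * (t ^ n * ι z) := by rw [pow_succ']; group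
      _ = t * (ι ((τ : F) ^ n * z) * t ^ n) := by rw [ih z]
      _ = (t * ι ((τ : F) ^ n * z)) * t ^ n := by group
      _ = (ι ((τ : F) * ((τ : F) ^ n * z)) * t) * t ^ n := by rw [hconj']
      _ = ι ((τ : F) ^ (n + 1) * z) * t ^ (n + 1) := by
          rw [pow_succ']
          group
  have claim4 : ∀ (x : F) (n : ℕ), ι x = t ^ n → x = 0 ∧ l ∣ n := by
    intro x n h
    have h1 : ∀ y : F, ι y = ι ((τ : F) ^ n * y) := by
      intro y
      have h2 : t ^ n * ι y = ι y * t ^ n := by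
        rw [← h, ← hι, ← hι, add_comm]
      have h3 := hconjn n y
      rw [h2] at h3
      exact mul_right_cancel h3
    have hτn : (τ : F) ^ n = 1 := by
      have := hinj (h1 1)
      simpa using this.symm
    have hτu : (τ : Fˣ) ^ n = 1 := Units.ext (by
      rw [Units.val_pow_eq_pow_val, hτn, Units.val_one])
    have hln : l ∣ n := horderτ ▸ orderOf_dvd_of_pow_eq_one hτu
    have htn : t ^ n = 1 := orderOf_dvd_iff_pow_eq_one.mp (horder ▸ hln)
    refine ⟨hinj ?_, hln⟩
    rw [h, htn, hι0]
  have hTadd : ∀ a b : ZMod l, t ^ (a + b).val = t ^ a.val * t ^ b.val := by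
    intro a b
    rw [← pow_add]
    apply pow_eq_pow_iff_modEq.mpr
    rw [horder, ZMod.val_add]
    exact Nat.mod_modEq _ l
  have hτadd : ∀ a b : ZMod l, (τ : Fˣ) ^ (a + b).val = τ ^ a.val * τ ^ b.val := by
    intro a b
    rw [← pow_add]
    apply pow_eq_pow_iff_modEq.mpr
    rw [horderτ, ZMod.val_add]
    exact Nat.mod_modEq _ l
  have hval0 : (0 : ZMod l).val = 0 := ZMod.val_zero
  have hTinv : ∀ a : ZMod l, (t ^ a.val)⁻¹ = t ^ (-a).val := by
    intro a
    apply inv_eq_of_mul_eq_one_left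
    rw [← hTadd, neg_add_cancel, hval0, pow_zero]
  have hvalinj : ∀ a b : ZMod l, a.val = b.val → a = b := fun a b h =>
    ZMod.val_injective l h
  have huniq : ∀ (x y : F) (a b : ZMod l),
      ι x * t ^ a.val = ι y * t ^ b.val → x = y ∧ a = b := by
    intro x y a b h
    have h1 : ι (x - y) = t ^ (b - a).val := by
      have e1 : ι (x - y) = (ι y)⁻¹ * ι x := by
        rw [← hιneg, ← hι]
        congr 1
        ring
      have e2 : t ^ (b - a).val = t ^ b.val * (t ^ a.val)⁻¹ := by
        rw [hTinv, ← hTadd]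
        congr 1
        ring
      rw [e1, e2]
      calc (ι y)⁻¹ * ι x = (ι y)⁻¹ * (ι x * t ^ a.val) * (t ^ a.val)⁻¹ := by group
      _ = (ι y)⁻¹ * (ι y * t ^ b.val) * (t ^ a.val)⁻¹ := by rw [h]
      _ = t ^ b.val * (t ^ a.val)⁻¹ := by group
    obtain ⟨hxy, hdvd'⟩ := claim4 _ _ h1
    have hba : (b - a).val = 0 := by
      rcases Nat.eq_zero_or_pos (b - a).val with h0 | hpos
      · exact h0
      · exact absurd (Nat.le_of_dvd hpos hdvd') (by have := ZMod.val_lt (b - a); omega)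
    have hab : a = b := by
      have : b - a = 0 := hvalinj _ _ (by rw [hba, hval0])
      have : b = a := by
        have h' := sub_eq_zero.mp this
        exact h'
      exact this.symm
    exact ⟨by have := sub_eq_zero.mp (by exact hxy : x - y = 0); exact this, hab⟩
  have hdec' : ∀ g : G, ∃ (x : F) (a : ZMod l), g = ι x * t ^ a.val := by
    intro g
    obtain ⟨x, i, hi, hg⟩ := hdecomp g
    exact ⟨x, (i : ZMod l), by rw [hg, ZMod.val_natCast_of_lt hi]⟩
  have ebij : Function.Bijective (fun zy : ZMod l × F => ι zy.2 * t ^ zy.1.val) := by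
    constructor
    · rintro ⟨a, x⟩ ⟨b, y⟩ hxy
      obtain ⟨h1, h2⟩ := huniq x y a b hxy
      simp only [Prod.mk.injEq]
      exact ⟨h2, h1⟩
    · intro g
      obtain ⟨x, a, hg⟩ := hdec' g
      exact ⟨(a, x), hg.symm⟩
  set eG : ZMod l × F ≃ G := Equiv.ofBijective _ ebij with heG
  have heGval : ∀ (a : ZMod l) (x : F), eG (a, x) = ι x * t ^ a.val := fun a x => rfl
  set B : ZMod l → Submodule K F := fun n => A ⟨n.val, ZMod.val_lt n⟩ with hBdef
  have hBrk : ∀ n : ZMod l, Module.finrank K (B n) = r - 1 := fun n => hA _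
  have hBinj : Function.Injective B := by
    intro a b hab
    have h1 := hAinj hab
    have h2 : a.val = b.val := congrArg Fin.val h1
    exact hvalinj _ _ h2
  have hmemS : ∀ (z : F) (n : ZMod l), ι z * t ^ n.val ∈ S ↔ z ∉ B n := by
    intro z n
    rw [hS]
    constructor
    · rintro ⟨i, y, hy, heq⟩
      have heq' : ι z * t ^ n.val = ι y * t ^ ((i : ℕ) : ZMod l).val := by
        rwa [ZMod.val_natCast_of_lt i.isLt]
      obtain ⟨rfl, rfl⟩ := huniq _ _ _ _ heq'
      have hfin : (⟨((i : ℕ) : ZMod l).val, ZMod.val_lt _⟩ : Fin l) = i := by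
        apply Fin.ext
        simp [ZMod.val_natCast_of_lt i.isLt]
      rw [hBdef]
      simp only [hfin]
      exact hy.2
    · intro hz
      exact ⟨⟨n.val, ZMod.val_lt n⟩, z, ⟨trivial, hz⟩, rfl⟩
  have hmemSinv : ∀ w : G, w⁻¹ ∈ S ↔ w ∈ S := by
    intro w
    nth_rewrite 1 [← hSinv]
    rw [Set.mem_inv, inv_inv]
  have hflip : ∀ (n : ZMod l) (y : F), y ∈ B n ↔ (τ : F) ^ ((-n).val) * y ∈ B (-n) := by
    intro n y
    have h3 : (ι y * t ^ n.val)⁻¹ = ι ((τ : F) ^ ((-n).val) * (-y)) * t ^ (-n).val := by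
      rw [mul_inv_rev, ← hιneg, hTinv, hconjn]
    have h4 := (hmemSinv (ι y * t ^ n.val)).trans (hmemS y n)
    rw [h3, hmemS] at h4
    have h5 : (τ : F) ^ ((-n).val) * (-y) = -((τ : F) ^ ((-n).val) * y) := by ring
    rw [h5, Submodule.neg_mem_iff] at h4
    constructor
    · intro hy
      by_contra hc
      exact (h4.mp hc) hy
    · intro hy
      by_contra hc
      exact (h4.mpr hc) hy
  have hSrel : ∀ n : ZMod l, uS (K := K) (τ ^ ((-n).val)) (B n) = B (-n) := by
    intro n
    ext z
    rw [mem_uS]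
    have hz : (τ : F) ^ ((-n).val) * (((τ ^ ((-n).val) : Fˣ)⁻¹ : Fˣ) : F) * z = z := by
      rw [← Units.val_pow_eq_pow_val, ← Units.val_mul, mul_inv_cancel, Units.val_one, one_mul]
    constructor
    · intro h
      have := (hflip n _).mp h
      rwa [← mul_assoc, hz] at this
    · intro h
      apply (hflip n _).mpr
      rwa [← mul_assoc, hz]
  have hkey : ∀ (m j : ZMod l), m ≠ 0 → uS (K := K) (τ ^ m.val) (B j) ≠ B (j + m) := by
    intro m j hm heq
    have h1 := congrArg (uS (K := K) (τ ^ ((-(j + m)).val))) heq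
    rw [uS_uS] at h1
    have h2 : (τ : Fˣ) ^ ((-(j + m)).val) * τ ^ m.val = τ ^ ((-j).val) := by
      rw [← hτadd]
      congr 1
      ring
    rw [h2, hSrel j, hSrel (j + m)] at h1
    have h3 := hBinj h1
    apply hm
    have h4 : -j = -(j + m) := h3
    have : j = j + m := neg_inj.mp h4
    exact left_eq_add.mp this
  -- generic counting over the sigma decomposition
  have hcount : ∀ (x : F) (m : ZMod l),
      Nat.card {d : G // d ∈ S ∧ (ι x * t ^ m.val) * d ∈ S}
        = ∑ n : ZMod l, {y : F | y ∉ B n ∧ x + (τ : F) ^ m.val * y ∉ B (m + n)}.ncard := by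
    intro x m
    have hQ : ∀ zy : ZMod l × F,
        (zy.2 ∉ B zy.1 ∧ x + (τ : F) ^ m.val * zy.2 ∉ B (m + zy.1)) ↔
          (eG zy ∈ S ∧ (ι x * t ^ m.val) * eG zy ∈ S) := by
      rintro ⟨n, y⟩
      have e2 : (ι x * t ^ m.val) * (ι y * t ^ n.val)
          = ι (x + (τ : F) ^ m.val * y) * t ^ (m + n).val := by
        rw [hι, hTadd]
        calc ι x * t ^ m.val * (ι y * t ^ n.val)
            = ι x * (t ^ m.val * ι y) * t ^ n.val := by group
        _ = ι x * (ι ((τ : F) ^ m.val * y) * t ^ m.val) * t ^ n.val := by rw [hconjn]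
        _ = ι x * ι ((τ : F) ^ m.val * y) * (t ^ m.val * t ^ n.val) := by group
      rw [heGval, e2, hmemS, hmemS]
    calc Nat.card {d : G // d ∈ S ∧ (ι x * t ^ m.val) * d ∈ S}
        = Nat.card {zy : ZMod l × F //
            zy.2 ∉ B zy.1 ∧ x + (τ : F) ^ m.val * zy.2 ∉ B (m + zy.1)} :=
          (Nat.card_congr (Equiv.subtypeEquiv eG hQ)).symm
    _ = Nat.card ((n : ZMod l) × {y : F // y ∉ B n ∧ x + (τ : F) ^ m.val * y ∉ B (m + n)}) :=
          Nat.card_congr (Equiv.subtypeProdEquivSigmaSubtype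
            (fun (n : ZMod l) (y : F) => y ∉ B n ∧ x + (τ : F) ^ m.val * y ∉ B (m + n)))
    _ = ∑ n : ZMod l, Nat.card {y : F // y ∉ B n ∧ x + (τ : F) ^ m.val * y ∉ B (m + n)} := by
          rw [Nat.card_eq_fintype_card, Fintype.card_sigma]
          exact Finset.sum_congr rfl fun n _ => (Nat.card_eq_fintype_card).symm
    _ = ∑ n : ZMod l, {y : F | y ∉ B n ∧ x + (τ : F) ^ m.val * y ∉ B (m + n)}.ncard :=
          Finset.sum_congr rfl fun n _ => Nat.card_coe_set_eq _
  have hcardSsum : Nat.card {d : G // d ∈ S} = ∑ n : ZMod l, {y : F | y ∉ B n}.ncard := by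
    have hQ : ∀ zy : ZMod l × F, (zy.2 ∉ B zy.1) ↔ eG zy ∈ S := by
      rintro ⟨n, y⟩
      rw [heGval, hmemS]
    calc Nat.card {d : G // d ∈ S}
        = Nat.card {zy : ZMod l × F // zy.2 ∉ B zy.1} :=
          (Nat.card_congr (Equiv.subtypeEquiv eG hQ)).symm
    _ = Nat.card ((n : ZMod l) × {y : F // y ∉ B n}) :=
          Nat.card_congr (Equiv.subtypeProdEquivSigmaSubtype
            (fun (n : ZMod l) (y : F) => y ∉ B n))
    _ = ∑ n : ZMod l, Nat.card {y : F // y ∉ B n} := by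
          rw [Nat.card_eq_fintype_card, Fintype.card_sigma]
          exact Finset.sum_congr rfl fun n _ => (Nat.card_eq_fintype_card).symm
    _ = ∑ n : ZMod l, {y : F | y ∉ B n}.ncard :=
          Finset.sum_congr rfl fun n _ => Nat.card_coe_set_eq _
  have hcompl : ∀ n : ZMod l, {y : F | y ∉ B n}.ncard + q ^ (r - 1) = q ^ r := by
    intro n
    have h1 := Set.ncard_add_ncard_compl (B n : Set F)
    have h2 : ((B n : Set F))ᶜ = {y : F | y ∉ B n} := by ext y; simp
    have h3 : (B n : Set F).ncard = q ^ (r - 1) := by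
      rw [ncard_submodule q hcardK, hBrk]
    rw [h2, h3, Nat.card_eq_fintype_card, hcardF] at h1
    omega
  have hle1q : 1 ≤ q := by omega
  have hle1qr : 1 ≤ q ^ r := by omega
  have hfZ : (l : ℤ) * ((q : ℤ) - 1) = (q : ℤ) ^ r - 1 := by
    have h := hfact
    zify [hle1q, hle1qr] at h
    exact h
  have hp1Z : (q : ℤ) ^ (r - 1) * (q : ℤ) = (q : ℤ) ^ r := by exact_mod_cast hpow1
  have hp2Z : (q : ℤ) ^ (r - 2) * (q : ℤ) = (q : ℤ) ^ (r - 1) := by exact_mod_cast hpow2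
  have hScard : Nat.card {d : G // d ∈ S} = k := by
    rw [hcardSsum]
    have hsum : (∑ n : ZMod l, {y : F | y ∉ B n}.ncard) + l * q ^ (r - 1) = l * q ^ r := by
      calc (∑ n : ZMod l, {y : F | y ∉ B n}.ncard) + l * q ^ (r - 1)
          = ∑ n : ZMod l, ({y : F | y ∉ B n}.ncard + q ^ (r - 1)) := by
            rw [Finset.sum_add_distrib, Finset.sum_const, Finset.card_univ, ZMod.card,
              smul_eq_mul]
      _ = ∑ _n : ZMod l, q ^ r := Finset.sum_congr rfl fun n _ => hcompl n
      _ = l * q ^ r := by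
            rw [Finset.sum_const, Finset.card_univ, ZMod.card, smul_eq_mul]
    have hknum : k + l * q ^ (r - 1) = l * q ^ r := by
      have hkZ : (k : ℤ) = (q : ℤ) ^ (r - 1) * ((q : ℤ) ^ r - 1) := by
        rw [hk]
        push_cast [Nat.cast_sub hle1qr]
        ring
      zify
      linear_combination hkZ - (q : ℤ) ^ (r - 1) * hfZ + (l : ℤ) * hp1Z
    exact Nat.add_right_cancel (hsum.trans hknum.symm)
  have hunion : X2 ∪ X4 = S := by
    rw [hX2, hX4, hS]
    ext g
    simp only [Set.mem_union, Set.mem_image, Set.mem_setOf_eq]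
    constructor
    · rintro (⟨y, hy, rfl⟩ | ⟨i, hi0, y, hy, rfl⟩)
      · exact ⟨⟨0, hlpos⟩, y, hy, by simp⟩
      · exact ⟨i, y, hy, rfl⟩
    · rintro ⟨i, y, hy, rfl⟩
      by_cases hi : (i : ℕ) = 0
      · left
        have hieq : i = ⟨0, hlpos⟩ := Fin.ext hi
        subst hieq
        exact ⟨y, hy, by simp⟩
      · right
        exact ⟨i, hi, y, hy, rfl⟩
  have hone : (1 : G) ∉ S := by
    rw [hS]
    rintro ⟨i, y, hy, heq⟩
    have heq' : ι 0 * t ^ (0 : ZMod l).val = ι y * t ^ ((i : ℕ) : ZMod l).val := by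
      rw [hval0, pow_zero, mul_one, hι0, ZMod.val_natCast_of_lt i.isLt, ← heq]
    obtain ⟨h1, h2⟩ := huniq _ _ _ _ heq'
    exact hy.2 (h1 ▸ (A i).zero_mem)
  -- the central difference count
  have hmaincount : ∀ g : G, g ≠ 1 →
      Nat.card {d : G // d ∈ S ∧ g * d ∈ S} = if g ∈ Set.range ι then l1 else l2 := by
    intro g hg
    obtain ⟨x, m, rfl⟩ := hdec' g
    have hrange : (ι x * t ^ m.val ∈ Set.range ι) ↔ m = 0 := by
      constructor
      · rintro ⟨y, hy⟩
        have heq' : ι y * t ^ (0 : ZMod l).val = ι x * t ^ m.val := by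
          rw [hval0, pow_zero, mul_one, hy]
        exact ((huniq _ _ _ _ heq').2).symm
      · rintro rfl
        exact ⟨x, by rw [hval0, pow_zero, mul_one]⟩
    rw [hcount x m]
    by_cases hm : m = 0
    · -- λ1 case
      rw [if_pos (hrange.mpr hm)]
      subst hm
      have hx0 : x ≠ 0 := by
        rintro rfl
        apply hg
        rw [hval0, pow_zero, mul_one, hι0]
      have hsimp : ∀ n : ZMod l,
          {y : F | y ∉ B n ∧ x + (τ : F) ^ (0 : ZMod l).val * y ∉ B ((0 : ZMod l) + n)}
            = {y : F | y ∉ B n ∧ x + y ∉ B n} := by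
        intro n
        rw [hval0]
        simp [zero_add]
      have hvaln : ∀ n : ZMod l, {y : F | y ∉ B n ∧ x + y ∉ B n}.ncard + 2 * q ^ (r - 1)
          = q ^ r + (if x ∈ B n then q ^ (r - 1) else 0) := by
        intro n
        have hcm := count_main (B n) (B n) x
        have hBn : ((B n : Submodule K F) : Set F).ncard = q ^ (r - 1) := by
          rw [ncard_submodule q hcardK, hBrk]
        rw [hBn, hcardF] at hcm
        by_cases hxB : x ∈ B n
        · rw [if_pos hxB]
          rw [inter_same_mem (B n) hxB, hBn] at hcm
          omega
        · rw [if_neg hxB]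
          rw [inter_same_not (B n) hxB, Set.ncard_empty] at hcm
          omega
      set cB := (Finset.univ.filter fun n : ZMod l => x ∈ B n).card with hcBdef
      have hsum : (∑ n : ZMod l, {y : F | y ∉ B n ∧ x + y ∉ B n}.ncard)
          + l * (2 * q ^ (r - 1)) = l * q ^ r + q ^ (r - 1) * cB := by
        calc (∑ n : ZMod l, {y : F | y ∉ B n ∧ x + y ∉ B n}.ncard) + l * (2 * q ^ (r - 1))
            = ∑ n : ZMod l, ({y : F | y ∉ B n ∧ x + y ∉ B n}.ncard + 2 * q ^ (r - 1)) := by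
              rw [Finset.sum_add_distrib, Finset.sum_const, Finset.card_univ, ZMod.card,
                smul_eq_mul]
        _ = ∑ n : ZMod l, (q ^ r + (if x ∈ B n then q ^ (r - 1) else 0)) :=
              Finset.sum_congr rfl fun n _ => hvaln n
        _ = l * q ^ r + ∑ n : ZMod l, (if x ∈ B n then q ^ (r - 1) else 0) := by
              rw [Finset.sum_add_distrib, Finset.sum_const, Finset.card_univ, ZMod.card,
                smul_eq_mul]
        _ = l * q ^ r + q ^ (r - 1) * cB := by
              congr 1
              rw [← Finset.sum_filter, Finset.sum_const, smul_eq_mul, hcBdef, mul_comm]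
      have hcB : cB * (q - 1) = q ^ (r - 1) - 1 := by
        have hAc := hyperplane_count hcardK hcardF hqr1 hfact hA hAinj hAall hx0
        have hbij : (Finset.univ.filter fun n : ZMod l => x ∈ B n).card
            = (Finset.univ.filter fun i : Fin l => x ∈ A i).card := by
          apply Finset.card_bij (fun n _ => (⟨n.val, ZMod.val_lt n⟩ : Fin l))
          · intro n hn
            simp only [Finset.mem_filter, Finset.mem_univ, true_and] at hn ⊢
            exact hn
          · intro n _ n' _ hh
            exact hvalinj _ _ (congrArg Fin.val hh)
          · intro i hi
            simp only [Finset.mem_filter, Finset.mem_univ, true_and] at hi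
            have hfin : (⟨((i : ℕ) : ZMod l).val, ZMod.val_lt _⟩ : Fin l) = i :=
              Fin.ext (by simp [ZMod.val_natCast_of_lt i.isLt])
            have hBA : B ((i : ℕ) : ZMod l) = A i := by
              rw [hBdef]
              exact congrArg A hfin
            refine ⟨((i : ℕ) : ZMod l), ?_, hfin⟩
            simp only [Finset.mem_filter, Finset.mem_univ, true_and]
            rw [hBA]
            exact hi
        rw [hcBdef, hbij]
        exact hAc
      have hnum : l1 + l * (2 * q ^ (r - 1)) = l * q ^ r + q ^ (r - 1) * cB := by
        have hle1qr1 : 1 ≤ q ^ (r - 1) := hqrpos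
        have ha'Z : (q : ℤ) ^ (r - 1) = (cB : ℤ) * ((q : ℤ) - 1) + 1 := by
          have h := hcB
          zify [hle1q, hle1qr1] at h
          linarith
        have hLZ : (l : ℤ) = (cB : ℤ) * ((q : ℤ) - 1) + cB + 1 := by
          have hq2Z : (2 : ℤ) ≤ (q : ℤ) := by exact_mod_cast hq2
          have hmm : ((l : ℤ) - ((cB : ℤ) * ((q : ℤ) - 1) + cB + 1)) * ((q : ℤ) - 1) = 0 := by
            linear_combination hfZ - hp1Z + (q : ℤ) * ha'Z
          rcases mul_eq_zero.mp hmm with h0 | h0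
          · linarith
          · linarith
        have hl1Z : (l1 : ℤ) = (q : ℤ) ^ (r - 1) * ((q : ℤ) ^ r - (q : ℤ) ^ (r - 1) - 1) := by
          rw [hl1]
          have hsub1 : q ^ (r - 1) ≤ q ^ r := by omega
          have hsub2 : 1 ≤ q ^ r - q ^ (r - 1) := by omega
          push_cast [Nat.cast_sub hsub1, Nat.cast_sub hsub2]
          ring
        zify
        linear_combination hl1Z + ((l : ℤ) - (q : ℤ) ^ (r - 1)) * hp1Z
          + (q : ℤ) ^ (r - 1) * ((q : ℤ) - 1) * ha'Z
          + (q : ℤ) ^ (r - 1) * (2 - (q : ℤ)) * hLZ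
      rw [Finset.sum_congr rfl fun n _ => congrArg Set.ncard (hsimp n)]
      exact Nat.add_right_cancel (hsum.trans hnum.symm)
    · -- λ2 case
      rw [if_neg (fun hcon => hm (hrange.mp hcon))]
      have hvaln : ∀ n : ZMod l,
          {y : F | y ∉ B n ∧ x + (τ : F) ^ m.val * y ∉ B (m + n)}.ncard + 2 * q ^ (r - 1)
            = q ^ r + q ^ (r - 2) := by
        intro n
        set u : Fˣ := τ ^ m.val with hu
        have huv : ((u : Fˣ) : F) = (τ : F) ^ m.val := by
          rw [hu, Units.val_pow_eq_pow_val]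
        have hinv1 : ∀ w : F, ((u⁻¹ : Fˣ) : F) * ((u : F) * w) = w := by
          intro w
          rw [← mul_assoc, ← Units.val_mul, inv_mul_cancel, Units.val_one, one_mul]
        have hinv2 : ∀ w : F, ((u : Fˣ) : F) * (((u⁻¹ : Fˣ) : F) * w) = w := by
          intro w
          rw [← mul_assoc, ← Units.val_mul, mul_inv_cancel, Units.val_one, one_mul]
        have himg : (fun y : F => ((u : Fˣ) : F) * y) ''
            {y : F | y ∉ B n ∧ x + (τ : F) ^ m.val * y ∉ B (m + n)}
            = {z : F | z ∉ uS (K := K) u (B n) ∧ x + z ∉ B (m + n)} := by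
          ext z
          simp only [Set.mem_image, Set.mem_setOf_eq]
          constructor
          · rintro ⟨y, ⟨hy1, hy2⟩, rfl⟩
            refine ⟨?_, ?_⟩
            · intro hz
              rw [mem_uS, hinv1] at hz
              exact hy1 hz
            · rw [huv]
              exact hy2
          · rintro ⟨hz1, hz2⟩
            refine ⟨((u⁻¹ : Fˣ) : F) * z, ⟨?_, ?_⟩, hinv2 z⟩
            · intro hy
              exact hz1 (mem_uS.mpr hy)
            · rw [huv] at hinv2
              rw [hinv2 z]
              exact hz2
        have hncard_img : {y : F | y ∉ B n ∧ x + (τ : F) ^ m.val * y ∉ B (m + n)}.ncard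
            = {z : F | z ∉ uS (K := K) u (B n) ∧ x + z ∉ B (m + n)}.ncard := by
          rw [← himg, Set.ncard_image_of_injective]
          intro a b hab
          have := congrArg (fun w => ((u⁻¹ : Fˣ) : F) * w) hab
          simpa [hinv1] using this
        rw [hncard_img]
        have hcm := count_main (uS (K := K) u (B n)) (B (m + n)) x
        have hV : ((uS (K := K) u (B n) : Submodule K F) : Set F).ncard = q ^ (r - 1) := by
          rw [ncard_submodule q hcardK, finrank_uS, hBrk]
        have hW : ((B (m + n) : Submodule K F) : Set F).ncard = q ^ (r - 1) := by
          rw [ncard_submodule q hcardK, hBrk]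
        have hne : uS (K := K) u (B n) ≠ B (m + n) := by
          rw [add_comm]
          exact hkey m n hm
        have hinter := inter_distinct hcardK hrank hr _ _
          (by rw [finrank_uS]; exact hBrk n) (hBrk (m + n)) hne x
        rw [hV, hW, hcardF, hinter] at hcm
        omega
      have hsum : (∑ n : ZMod l, {y : F | y ∉ B n ∧ x + (τ : F) ^ m.val * y ∉ B (m + n)}.ncard)
          + l * (2 * q ^ (r - 1)) = l * (q ^ r + q ^ (r - 2)) := by
        calc (∑ n : ZMod l, {y : F | y ∉ B n ∧ x + (τ : F) ^ m.val * y ∉ B (m + n)}.ncard)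
            + l * (2 * q ^ (r - 1))
            = ∑ n : ZMod l, ({y : F | y ∉ B n ∧ x + (τ : F) ^ m.val * y ∉ B (m + n)}.ncard
                + 2 * q ^ (r - 1)) := by
              rw [Finset.sum_add_distrib, Finset.sum_const, Finset.card_univ, ZMod.card,
                smul_eq_mul]
        _ = ∑ _n : ZMod l, (q ^ r + q ^ (r - 2)) :=
              Finset.sum_congr rfl fun n _ => hvaln n
        _ = l * (q ^ r + q ^ (r - 2)) := by
              rw [Finset.sum_const, Finset.card_univ, ZMod.card, smul_eq_mul]
      have hnum : l2 + l * (2 * q ^ (r - 1)) = l * (q ^ r + q ^ (r - 2)) := by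
        have hl2Z : (l2 : ℤ) = (q : ℤ) ^ (r - 2) * ((q : ℤ) - 1) * ((q : ℤ) ^ r - 1) := by
          rw [hl2]
          push_cast [Nat.cast_sub hle1q, Nat.cast_sub hle1qr]
          ring
        zify
        linear_combination hl2Z - (q : ℤ) ^ (r - 2) * ((q : ℤ) - 1) * hfZ
          + (l : ℤ) * hp1Z + (l : ℤ) * ((q : ℤ) - 2) * hp2Z
      exact Nat.add_right_cancel (hsum.trans hnum.symm)
  -- pair count
  have hpaircount : ∀ g : G, g ≠ 1 →
      Nat.card {pr : G × G // pr.1 ∈ S ∧ pr.2 ∈ S ∧ pr.1 * pr.2⁻¹ = g}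
        = if g ∈ Set.range ι then l1 else l2 := by
    intro g hg
    have epair : {pr : G × G // pr.1 ∈ S ∧ pr.2 ∈ S ∧ pr.1 * pr.2⁻¹ = g}
        ≃ {d : G // d ∈ S ∧ g * d ∈ S} :=
      { toFun := fun pr => ⟨pr.1.2, pr.2.2.1, by
          obtain ⟨⟨d1, d2⟩, h1, h2, h3⟩ := pr
          dsimp only at *
          rw [← h3, inv_mul_cancel_right]
          exact h1⟩
        invFun := fun d => ⟨(g * d.1, d.1), d.2.2, d.2.1, by
          rw [mul_inv_cancel_right]⟩
        left_inv := fun pr => by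
          obtain ⟨⟨d1, d2⟩, h1, h2, h3⟩ := pr
          apply Subtype.ext
          apply Prod.ext
          · show g * d2 = d1
            rw [← h3, inv_mul_cancel_right]
          · rfl
        right_inv := fun d => rfl }
    rw [← hmaincount g hg]
    exact Nat.card_congr epair
  -- global integer facts for l1 vs l2
  have hgl1Z : (l1 : ℤ) = (q : ℤ) ^ (r - 1) * ((q : ℤ) ^ r - (q : ℤ) ^ (r - 1) - 1) := by
    rw [hl1]
    have hsub1 : q ^ (r - 1) ≤ q ^ r := by omega
    have hsub2 : 1 ≤ q ^ r - q ^ (r - 1) := by omega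
    push_cast [Nat.cast_sub hsub1, Nat.cast_sub hsub2]
    ring
  have hgl2Z : (l2 : ℤ) = (q : ℤ) ^ (r - 2) * ((q : ℤ) - 1) * ((q : ℤ) ^ r - 1) := by
    rw [hl2]
    push_cast [Nat.cast_sub hle1q, Nat.cast_sub hle1qr]
    ring
  have hl1l2Z : (l1 : ℤ) + (q : ℤ) ^ (r - 2) = (l2 : ℤ) := by
    rw [hgl1Z, hgl2Z, ← hp1Z, ← hp2Z]
    ring
  have hl1l2 : l1 + q ^ (r - 2) = l2 := by exact_mod_cast hl1l2Z
  refine ⟨hunion, ?_, ?_, ?_, ?_, ?_, ?_, ?_, ?_, hllt, hqr1⟩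
  · rw [hunion]
    exact hSinv
  · rw [hunion]
    exact hone
  · rw [hunion]
    exact hScard
  · rw [Nat.card_range_of_injective hinj, Nat.card_eq_fintype_card, hcardF]
  · intro g hg
    rw [hunion]
    exact hpaircount g hg
  · intro g
    rw [hunion]
    have e7 : {x : G // x * g⁻¹ ∈ S} ≃ {d : G // d ∈ S} :=
      { toFun := fun x => ⟨x.1 * g⁻¹, x.2⟩
        invFun := fun d => ⟨d.1 * g, by rw [mul_inv_cancel_right]; exact d.2⟩
        left_inv := fun x => Subtype.ext (by
          show x.1 * g⁻¹ * g = x.1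
          rw [inv_mul_cancel_right])
        right_inv := fun d => Subtype.ext (by
          show d.1 * g * g⁻¹ = d.1
          rw [mul_inv_cancel_right]) }
    exact (Nat.card_congr e7).trans hScard
  · intro g h hgh
    rw [hunion]
    have hne : g * h⁻¹ ≠ 1 := fun hcon => hgh (by rwa [mul_inv_eq_one] at hcon)
    have e8 : {x : G // x * g⁻¹ ∈ S ∧ x * h⁻¹ ∈ S}
        ≃ {pr : G × G // pr.1 ∈ S ∧ pr.2 ∈ S ∧ pr.1 * pr.2⁻¹ = g * h⁻¹} :=
      { toFun := fun x => ⟨(g * x.1⁻¹, h * x.1⁻¹), by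
          have h1 := (hmemSinv (x.1 * g⁻¹)).mpr x.2.1
          rwa [mul_inv_rev, inv_inv] at h1, by
          have h2 := (hmemSinv (x.1 * h⁻¹)).mpr x.2.2
          rwa [mul_inv_rev, inv_inv] at h2, by group⟩
        invFun := fun pr => ⟨pr.1.2⁻¹ * h, by
          obtain ⟨⟨d1, d2⟩, h1, h2, h3⟩ := pr
          dsimp only at *
          constructor
          · have h4 := (hmemSinv d1).mpr h1
            have hd1 : d1 = g * h⁻¹ * d2 := by
              rw [← h3]
              group
            have heq : d1⁻¹ = (d2⁻¹ * h) * g⁻¹ := by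
              rw [hd1]
              group
            rwa [heq] at h4
          · have h4 := (hmemSinv d2).mpr h2
            rwa [show d2⁻¹ = (d2⁻¹ * h) * h⁻¹ from by group] at h4⟩
        left_inv := fun x => Subtype.ext (by
          show (h * x.1⁻¹)⁻¹ * h = x.1
          group)
        right_inv := fun pr => by
          obtain ⟨⟨d1, d2⟩, h1, h2, h3⟩ := pr
          apply Subtype.ext
          apply Prod.ext
          · show g * (d2⁻¹ * h)⁻¹ = d1
            have hd1 : d1 = g * h⁻¹ * d2 := by
              rw [← h3]
              group
            rw [hd1]
            group
          · show h * (d2⁻¹ * h)⁻¹ = d2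
            group }
    exact (Nat.card_congr e8).trans (hpaircount _ hne)
  · omega
end

section
/- In the weighing-matrix setup with t ≥ 3, the matrix M4 = J − M0 − M1 − M2 − M3 has all entries in {0,1}, and the following identities of integer matrices hold: M1*M3 = M3*M1 = M4; M2*M3 = M3*M2 = 3•M3 + 3•M4; and M3*M3 = 4(t−1)•M0 + 2(t−1)•M2 + 2(t−2)•(M3 + M4). -/
open Matrix

lemma sum_ite_ite' {α : Type*} [Fintype α] [DecidableEq α] (v : α) (P : α → Prop)
    [DecidablePred P] :
    (∑ x, if P x then (if v = x then (1:ℤ) else 0) else 0) = if P v then 1 else 0 := by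
  rw [Finset.sum_congr rfl (g := fun x => if v = x then (if P x then (1:ℤ) else 0) else 0)
    (fun x _ => by by_cases h1 : P x <;> by_cases h2 : v = x <;> simp [h1, h2])]
  simp


section
variable (t : ℕ) (W : Matrix (Fin t × Fin 4) (Fin t × Fin 4) ℤ)

lemma aux_key (t : ℕ) (W : Matrix (Fin t × Fin 4) (Fin t × Fin 4) ℤ)
    (hWent : ∀ u w, W u w = -1 ∨ W u w = 0 ∨ W u w = 1)
    (hWW : W * W = (4 * ((t : ℤ) - 1)) • (1 : Matrix (Fin t × Fin 4) (Fin t × Fin 4) ℤ))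
    (hWdiag : ∀ u w : Fin t × Fin 4, u.1 = w.1 → W u w = 0) :
    ∀ u w, W u w = 0 ↔ u.1 = w.1 := by
  intro u w
  refine ⟨fun h0 => ?_, hWdiag u w⟩
  by_contra hne
  have h1 : ∑ k, W u k * W k u = 4 * ((t:ℤ) - 1) := by
    have := congrFun (congrFun hWW u) u
    simpa [Matrix.mul_apply, Matrix.smul_apply, Matrix.one_apply] using this
  have h2 : (∑ k : Fin t × Fin 4, if k.1 = u.1 then (0:ℤ) else 1) = 4 * ((t:ℤ) - 1) := by
    rw [Fintype.sum_prod_type]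
    have e1 : ∀ i : Fin t, (∑ _j : Fin 4, if i = u.1 then (0:ℤ) else 1)
        = 4 * (1 - if i = u.1 then (1:ℤ) else 0) := by
      intro i
      split <;> simp
    simp only [e1]
    rw [← Finset.mul_sum, Finset.sum_sub_distrib]
    simp [Finset.card_univ, mul_sub]
  have hlt : (∑ k, W u k * W k u) < ∑ k : Fin t × Fin 4, if k.1 = u.1 then (0:ℤ) else 1 := by
    apply Finset.sum_lt_sum
    · intro k _
      by_cases hk : k.1 = u.1
      · simp [hk, hWdiag u k hk.symm]
      · simp only [if_neg hk]
        rcases hWent u k with h | h | h <;> rcases hWent k u with h' | h' | h' <;>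
          simp [h, h']
    · refine ⟨w, Finset.mem_univ w, ?_⟩
      have : ¬ (w.1 = u.1) := fun h => hne h.symm
      simp [h0, this]
  rw [h1, h2] at hlt
  exact lt_irrefl _ hlt


lemma aux_M4e
    (key : ∀ u w, W u w = 0 ↔ u.1 = w.1)
    (hWent : ∀ u w, W u w = -1 ∨ W u w = 0 ∨ W u w = 1) :
    ∀ (v w : Fin t × Fin 4) (a b : Fin 2),
    (((Matrix.of fun _ _ => (1:ℤ))
      - 1
      - (Matrix.of fun pq rs : (Fin t × Fin 4) × Fin 2 => if pq.1 = rs.1 ∧ pq.2 ≠ rs.2 then 1 else 0)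
      - (Matrix.of fun pq rs : (Fin t × Fin 4) × Fin 2 => if pq.1 ≠ rs.1 ∧ pq.1.1 = rs.1.1 then 1 else 0)
      - (Matrix.of fun pq rs : (Fin t × Fin 4) × Fin 2 => if (W pq.1 rs.1 = 1 ∧ pq.2 = rs.2) ∨ (W pq.1 rs.1 = -1 ∧ pq.2 ≠ rs.2) then 1 else 0)
      : Matrix ((Fin t × Fin 4) × Fin 2) ((Fin t × Fin 4) × Fin 2) ℤ)) (v,a) (w,b)
      = if (W v w = 1 ∧ a ≠ b) ∨ (W v w = -1 ∧ a = b) then 1 else 0 := by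
  intro v w a b
  simp only [Matrix.sub_apply, Matrix.of_apply, Matrix.one_apply, Prod.mk.injEq]
  rcases hWent v w with h | h | h
  · have hne : ¬ v.1 = w.1 := fun hh => by simp [(key v w).2 hh] at h
    have hvw : ¬ v = w := fun hh => hne (by rw [hh])
    by_cases hab : a = b <;> simp [h, hne, hvw, hab]
  · have heq : v.1 = w.1 := (key v w).1 h
    by_cases hvw : v = w
    · subst hvw; by_cases hab : a = b <;> simp [h, hab]
    · by_cases hab : a = b <;> simp [h, heq, hvw, hab]
  · have hne : ¬ v.1 = w.1 := fun hh => by simp [(key v w).2 hh] at h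
    have hvw : ¬ v = w := fun hh => hne (by rw [hh])
    by_cases hab : a = b <;> simp [h, hne, hvw, hab]



lemma aux_sq (key : ∀ u w, W u w = 0 ↔ u.1 = w.1)
    (hWent : ∀ u w, W u w = -1 ∨ W u w = 0 ∨ W u w = 1) (u w : Fin t × Fin 4) :
    (W u w)^2 = if u.1 = w.1 then 0 else 1 := by
  by_cases h : u.1 = w.1
  · simp [h, (key u w).2 h]
  · rcases hWent u w with h' | h' | h'
    · simp [h, h']
    · exact absurd ((key u w).1 h') h
    · simp [h, h']

lemma aux_card3 (v : Fin t × Fin 4) :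
    (∑ u : Fin t × Fin 4, if v ≠ u ∧ v.1 = u.1 then (1:ℤ) else 0) = 3 := by
  rw [Fintype.sum_prod_type]
  have e : ∀ (i : Fin t) (j : Fin 4), (if v ≠ (i, j) ∧ v.1 = i then (1:ℤ) else 0)
      = (if v.1 = i then 1 else 0) * (if v.2 = j then 0 else 1) := by
    intro i j
    by_cases h1 : v.1 = i <;> by_cases h2 : v.2 = j <;>
      simp [h1, h2, Prod.ext_iff]
  simp only [e]
  rw [← Finset.sum_mul_sum]
  have e2 : (∑ j : Fin 4, if v.2 = j then (0:ℤ) else 1) = 3 := by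
    rw [Finset.sum_congr rfl (g := fun j => 1 - if v.2 = j then (1:ℤ) else 0)
      (fun j _ => by by_cases h : v.2 = j <;> simp [h])]
    rw [Finset.sum_sub_distrib]
    simp
  rw [e2]
  simp

lemma aux_countN (key : ∀ u w, W u w = 0 ↔ u.1 = w.1)
    (hWent : ∀ u w, W u w = -1 ∨ W u w = 0 ∨ W u w = 1) (v w : Fin t × Fin 4) :
    (∑ u : Fin t × Fin 4, (W v u * W u w)^2)
      = 4 * ((t:ℤ) - 2 + if v.1 = w.1 then 1 else 0) := by
  have e : ∀ u : Fin t × Fin 4, (W v u * W u w)^2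
      = (if v.1 = u.1 then (0:ℤ) else 1) * (if w.1 = u.1 then 0 else 1) := by
    intro u
    rw [mul_pow, aux_sq t W key hWent v u, aux_sq t W key hWent u w]
    congr 1
    by_cases h : u.1 = w.1
    · rw [if_pos h, if_pos h.symm]
    · rw [if_neg h, if_neg (fun hh => h hh.symm)]
  simp only [e]
  rw [Fintype.sum_prod_type]
  have e2 : ∀ i : Fin t, (∑ _j : Fin 4, (if v.1 = i then (0:ℤ) else 1) * (if w.1 = i then 0 else 1))
      = 4 * ((1 - (if v.1 = i then (1:ℤ) else 0)) * (1 - if w.1 = i then 1 else 0)) := by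
    intro i
    rw [Finset.sum_const, Finset.card_univ]
    by_cases h1 : v.1 = i <;> by_cases h2 : w.1 = i <;>
      simp [h1, h2] <;> ring
  simp only [e2]
  rw [← Finset.mul_sum]
  have e3 : (∑ i : Fin t, (1 - (if v.1 = i then (1:ℤ) else 0)) * (1 - if w.1 = i then 1 else 0))
      = (t:ℤ) - 2 + if v.1 = w.1 then 1 else 0 := by
    have e4 : ∀ i : Fin t, (1 - (if v.1 = i then (1:ℤ) else 0)) * (1 - if w.1 = i then 1 else 0)
        = 1 - (if v.1 = i then (1:ℤ) else 0) - (if w.1 = i then 1 else 0)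
          + (if w.1 = i then (if v.1 = i then (1:ℤ) else 0) else 0) := by
      intro i
      by_cases h1 : v.1 = i <;> by_cases h2 : w.1 = i <;> simp [h1, h2] <;> ring
    simp only [e4]
    rw [Finset.sum_add_distrib, Finset.sum_sub_distrib, Finset.sum_sub_distrib,
      sum_ite_ite' (v.1) (fun i => w.1 = i)]
    have : (if w.1 = v.1 then (1:ℤ) else 0) = if v.1 = w.1 then 1 else 0 := by
      simp [eq_comm]
    rw [this]
    simp
    ring
  rw [e3]

lemma aux_13 (v w : Fin t × Fin 4) (a b : Fin 2) :
    (∑ z : (Fin t × Fin 4) × Fin 2, (if v = z.1 ∧ a ≠ z.2 then (1:ℤ) else 0) *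
      (if (W z.1 w = 1 ∧ z.2 = b) ∨ (W z.1 w = -1 ∧ z.2 ≠ b) then 1 else 0))
    = if (W v w = 1 ∧ a ≠ b) ∨ (W v w = -1 ∧ a = b) then 1 else 0 := by
  rw [Fintype.sum_prod_type]
  fin_cases a <;> fin_cases b <;>
    simp [Fin.sum_univ_two, ite_mul, mul_ite, sum_ite_ite']

lemma aux_31 (v w : Fin t × Fin 4) (a b : Fin 2) :
    (∑ z : (Fin t × Fin 4) × Fin 2,
      (if (W v z.1 = 1 ∧ a = z.2) ∨ (W v z.1 = -1 ∧ a ≠ z.2) then (1:ℤ) else 0) *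
      (if z.1 = w ∧ z.2 ≠ b then 1 else 0))
    = if (W v w = 1 ∧ a ≠ b) ∨ (W v w = -1 ∧ a = b) then 1 else 0 := by
  rw [Fintype.sum_prod_type]
  fin_cases a <;> fin_cases b <;>
    simp [Fin.sum_univ_two, ite_mul, mul_ite, sum_ite_ite']

-- inner sums over Fin 2 for M3 columns/rows
lemma aux_col (hWent : ∀ u w, W u w = -1 ∨ W u w = 0 ∨ W u w = 1)
    (u w : Fin t × Fin 4) (b : Fin 2) :
    (∑ c : Fin 2, if (W u w = 1 ∧ c = b) ∨ (W u w = -1 ∧ c ≠ b) then (1:ℤ) else 0)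
      = (W u w)^2 := by
  rcases hWent u w with h | h | h <;> fin_cases b <;>
    rw [Fin.sum_univ_two] <;> norm_num [h]

lemma aux_row (hWent : ∀ u w, W u w = -1 ∨ W u w = 0 ∨ W u w = 1)
    (v u : Fin t × Fin 4) (a : Fin 2) :
    (∑ c : Fin 2, if (W v u = 1 ∧ a = c) ∨ (W v u = -1 ∧ a ≠ c) then (1:ℤ) else 0)
      = (W v u)^2 := by
  rcases hWent v u with h | h | h <;> fin_cases a <;>
    rw [Fin.sum_univ_two] <;> norm_num [h]

lemma aux_23 (key : ∀ u w, W u w = 0 ↔ u.1 = w.1)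
    (hWent : ∀ u w, W u w = -1 ∨ W u w = 0 ∨ W u w = 1)
    (v w : Fin t × Fin 4) (a b : Fin 2) :
    (∑ z : (Fin t × Fin 4) × Fin 2, (if v ≠ z.1 ∧ v.1 = z.1.1 then (1:ℤ) else 0) *
      (if (W z.1 w = 1 ∧ z.2 = b) ∨ (W z.1 w = -1 ∧ z.2 ≠ b) then 1 else 0))
    = 3 * (if (W v w = 1 ∧ a = b) ∨ (W v w = -1 ∧ a ≠ b) then 1 else 0)
      + 3 * (if (W v w = 1 ∧ a ≠ b) ∨ (W v w = -1 ∧ a = b) then 1 else 0) := by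
  rw [Fintype.sum_prod_type]
  have e : ∀ u : Fin t × Fin 4,
      (∑ c : Fin 2, (if v ≠ u ∧ v.1 = u.1 then (1:ℤ) else 0) *
        (if (W u w = 1 ∧ c = b) ∨ (W u w = -1 ∧ c ≠ b) then 1 else 0))
      = (if v ≠ u ∧ v.1 = u.1 then (1:ℤ) else 0) * (W u w)^2 := by
    intro u
    rw [← Finset.mul_sum, aux_col t W hWent u w b]
  simp only [e]
  by_cases hvw : v.1 = w.1
  · have h0 : W v w = 0 := (key v w).2 hvw
    rw [Finset.sum_eq_zero, h0]
    · norm_num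
    · intro u _
      by_cases hc : v ≠ u ∧ v.1 = u.1
      · have : u.1 = w.1 := hc.2.symm.trans hvw
        simp [hc, aux_sq t W key hWent u w, this]
      · simp [hc]
  · have e2 : ∀ u : Fin t × Fin 4, (if v ≠ u ∧ v.1 = u.1 then (1:ℤ) else 0) * (W u w)^2
        = if v ≠ u ∧ v.1 = u.1 then 1 else 0 := by
      intro u
      by_cases hc : v ≠ u ∧ v.1 = u.1
      · have hu : ¬ u.1 = w.1 := fun h => hvw (hc.2.trans h)
        simp [hc, aux_sq t W key hWent u w, hu]
      · simp [hc]
    simp only [e2]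
    rw [aux_card3 t v]
    rcases hWent v w with h | h | h
    · by_cases hab : a = b <;> simp [h, hab] <;> norm_num
    · exact absurd ((key v w).1 h) hvw
    · by_cases hab : a = b <;> simp [h, hab] <;> norm_num

lemma aux_32 (key : ∀ u w, W u w = 0 ↔ u.1 = w.1)
    (hWent : ∀ u w, W u w = -1 ∨ W u w = 0 ∨ W u w = 1)
    (v w : Fin t × Fin 4) (a b : Fin 2) :
    (∑ z : (Fin t × Fin 4) × Fin 2,
      (if (W v z.1 = 1 ∧ a = z.2) ∨ (W v z.1 = -1 ∧ a ≠ z.2) then (1:ℤ) else 0) *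
      (if z.1 ≠ w ∧ z.1.1 = w.1 then 1 else 0))
    = 3 * (if (W v w = 1 ∧ a = b) ∨ (W v w = -1 ∧ a ≠ b) then 1 else 0)
      + 3 * (if (W v w = 1 ∧ a ≠ b) ∨ (W v w = -1 ∧ a = b) then 1 else 0) := by
  rw [Fintype.sum_prod_type]
  have e : ∀ u : Fin t × Fin 4,
      (∑ c : Fin 2, (if (W v u = 1 ∧ a = c) ∨ (W v u = -1 ∧ a ≠ c) then (1:ℤ) else 0) *
        (if u ≠ w ∧ u.1 = w.1 then 1 else 0))
      = (W v u)^2 * (if w ≠ u ∧ w.1 = u.1 then (1:ℤ) else 0) := by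
    intro u
    rw [← Finset.sum_mul, aux_row t W hWent v u a]
    congr 1
    by_cases h1 : u = w
    · simp [h1]
    · have h1' : ¬ w = u := fun h => h1 h.symm
      by_cases h2 : u.1 = w.1
      · rw [if_pos ⟨h1, h2⟩, if_pos ⟨h1', h2.symm⟩]
      · rw [if_neg (fun hc => h2 hc.2), if_neg (fun hc => h2 hc.2.symm)]
  simp only [e]
  by_cases hvw : v.1 = w.1
  · have h0 : W v w = 0 := (key v w).2 hvw
    rw [Finset.sum_eq_zero, h0]
    · norm_num
    · intro u _
      by_cases hc : w ≠ u ∧ w.1 = u.1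
      · have : v.1 = u.1 := hvw.trans hc.2
        simp [hc, aux_sq t W key hWent v u, this]
      · simp [hc]
  · have e2 : ∀ u : Fin t × Fin 4, (W v u)^2 * (if w ≠ u ∧ w.1 = u.1 then (1:ℤ) else 0)
        = if w ≠ u ∧ w.1 = u.1 then 1 else 0 := by
      intro u
      by_cases hc : w ≠ u ∧ w.1 = u.1
      · have hu : ¬ v.1 = u.1 := fun h => hvw (h.trans hc.2.symm)
        simp [hc, aux_sq t W key hWent v u, hu]
      · simp [hc]
    simp only [e2]
    rw [aux_card3 t w]
    rcases hWent v w with h | h | h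
    · by_cases hab : a = b <;> simp [h, hab] <;> norm_num
    · exact absurd ((key v w).1 h) hvw
    · by_cases hab : a = b <;> simp [h, hab] <;> norm_num

lemma aux_two_inner (hWent : ∀ u w, W u w = -1 ∨ W u w = 0 ∨ W u w = 1)
    (v u w : Fin t × Fin 4) (a b : Fin 2) :
    2 * (∑ c : Fin 2, (if (W v u = 1 ∧ a = c) ∨ (W v u = -1 ∧ a ≠ c) then (1:ℤ) else 0) *
      (if (W u w = 1 ∧ c = b) ∨ (W u w = -1 ∧ c ≠ b) then 1 else 0))
    = (W v u * W u w)^2 + (if a = b then 1 else -1) * (W v u * W u w) := by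
  rcases hWent v u with h1 | h1 | h1 <;> rcases hWent u w with h2 | h2 | h2 <;>
    fin_cases a <;> fin_cases b <;>
    simp [Fin.sum_univ_two, h1, h2] <;> norm_num


lemma aux_WWsum
    (hWW : W * W = (4 * ((t : ℤ) - 1)) • (1 : Matrix (Fin t × Fin 4) (Fin t × Fin 4) ℤ))
    (v w : Fin t × Fin 4) :
    (∑ u, W v u * W u w) = if v = w then 4 * ((t:ℤ) - 1) else 0 := by
  have := congrFun (congrFun hWW v) w
  simpa [Matrix.mul_apply, Matrix.smul_apply, Matrix.one_apply, mul_ite] using this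

lemma aux_33 (key : ∀ u w, W u w = 0 ↔ u.1 = w.1)
    (hWent : ∀ u w, W u w = -1 ∨ W u w = 0 ∨ W u w = 1)
    (hWW : W * W = (4 * ((t : ℤ) - 1)) • (1 : Matrix (Fin t × Fin 4) (Fin t × Fin 4) ℤ))
    (v w : Fin t × Fin 4) (a b : Fin 2) :
    (∑ z : (Fin t × Fin 4) × Fin 2,
      (if (W v z.1 = 1 ∧ a = z.2) ∨ (W v z.1 = -1 ∧ a ≠ z.2) then (1:ℤ) else 0) *
      (if (W z.1 w = 1 ∧ z.2 = b) ∨ (W z.1 w = -1 ∧ z.2 ≠ b) then 1 else 0))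
    = 4 * ((t:ℤ) - 1) * (if v = w ∧ a = b then 1 else 0)
      + 2 * ((t:ℤ) - 1) * (if v ≠ w ∧ v.1 = w.1 then 1 else 0)
      + 2 * ((t:ℤ) - 2) * ((if (W v w = 1 ∧ a = b) ∨ (W v w = -1 ∧ a ≠ b) then 1 else 0)
          + (if (W v w = 1 ∧ a ≠ b) ∨ (W v w = -1 ∧ a = b) then 1 else 0)) := by
  have key2 : 2 * (∑ z : (Fin t × Fin 4) × Fin 2,
      (if (W v z.1 = 1 ∧ a = z.2) ∨ (W v z.1 = -1 ∧ a ≠ z.2) then (1:ℤ) else 0) *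
      (if (W z.1 w = 1 ∧ z.2 = b) ∨ (W z.1 w = -1 ∧ z.2 ≠ b) then 1 else 0))
      = 4 * ((t:ℤ) - 2 + if v.1 = w.1 then 1 else 0)
        + (if a = b then 1 else -1) * (if v = w then 4 * ((t:ℤ) - 1) else 0) := by
    rw [Fintype.sum_prod_type, Finset.mul_sum,
      Finset.sum_congr rfl (fun u _ => aux_two_inner t W hWent v u w a b),
      Finset.sum_add_distrib, aux_countN t W key hWent v w, ← Finset.mul_sum,
      aux_WWsum t W hWW v w]
  rcases hWent v w with h | h | h
  · have hne : ¬ v.1 = w.1 := fun hh => by simp [(key v w).2 hh] at h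
    have hvw : ¬ v = w := fun hh => hne (by rw [hh])
    by_cases hab : a = b <;>
      [(simp [h, hne, hvw, hab] at key2 ⊢ <;> linarith);
       (simp [h, hne, hvw, hab] at key2 ⊢ <;> linarith)]
  · have heq : v.1 = w.1 := (key v w).1 h
    by_cases hvw : v = w
    · subst hvw
      by_cases hab : a = b <;>
        (simp [h, hab] at key2 ⊢ <;> linarith)
    · by_cases hab : a = b <;>
        (simp [h, heq, hvw, hab] at key2 ⊢ <;> linarith)
  · have hne : ¬ v.1 = w.1 := fun hh => by simp [(key v w).2 hh] at h
    have hvw : ¬ v = w := fun hh => hne (by rw [hh])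
    by_cases hab : a = b <;>
      (simp [h, hne, hvw, hab] at key2 ⊢ <;> linarith)

end

open Matrix

/-- in the weighing-matrix setup with `t ≥ 3`, the matrix
`M4 = J − M0 − M1 − M2 − M3` is a `{0,1}`-matrix, and
`M1*M3 = M3*M1 = M4`, `M2*M3 = M3*M2 = 3•M3 + 3•M4`,
`M3*M3 = 4(t−1)•M0 + 2(t−1)•M2 + 2(t−2)•(M3 + M4)`. -/
theorem weighing_matrix_identities
    (t : ℕ) (ht : 3 ≤ t)
    (W : Matrix (Fin t × Fin 4) (Fin t × Fin 4) ℤ)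
    (hWsymm : Wᵀ = W)
    (hWent : ∀ u w, W u w = -1 ∨ W u w = 0 ∨ W u w = 1)
    (hWW : W * W = (4 * ((t : ℤ) - 1)) • (1 : Matrix (Fin t × Fin 4) (Fin t × Fin 4) ℤ))
    (hWdiag : ∀ u w : Fin t × Fin 4, u.1 = w.1 → W u w = 0)
    (M0 M1 M2 M3 M4 J : Matrix ((Fin t × Fin 4) × Fin 2) ((Fin t × Fin 4) × Fin 2) ℤ)
    (hM0 : M0 = 1)
    (hM1 : M1 = Matrix.of fun pq rs =>
      if pq.1 = rs.1 ∧ pq.2 ≠ rs.2 then 1 else 0)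
    (hM2 : M2 = Matrix.of fun pq rs =>
      if pq.1 ≠ rs.1 ∧ pq.1.1 = rs.1.1 then 1 else 0)
    (hM3 : M3 = Matrix.of fun pq rs =>
      if (W pq.1 rs.1 = 1 ∧ pq.2 = rs.2) ∨ (W pq.1 rs.1 = -1 ∧ pq.2 ≠ rs.2)
        then 1 else 0)
    (hJ : J = Matrix.of fun _ _ => 1)
    (hM4 : M4 = J - M0 - M1 - M2 - M3) :
    (∀ x y, M4 x y = 0 ∨ M4 x y = 1) ∧
    M1 * M3 = M4 ∧ M3 * M1 = M4 ∧
    M2 * M3 = (3 : ℤ) • M3 + (3 : ℤ) • M4 ∧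
    M3 * M2 = (3 : ℤ) • M3 + (3 : ℤ) • M4 ∧
    M3 * M3 = (4 * ((t : ℤ) - 1)) • M0 + (2 * ((t : ℤ) - 1)) • M2
        + (2 * ((t : ℤ) - 2)) • (M3 + M4) := by
  have key := aux_key t W hWent hWW hWdiag
  have hE4 : ∀ (v w : Fin t × Fin 4) (a b : Fin 2),
      M4 (v, a) (w, b) = if (W v w = 1 ∧ a ≠ b) ∨ (W v w = -1 ∧ a = b) then 1 else 0 := by
    intro v w a b
    rw [hM4, hJ, hM0, hM1, hM2, hM3]
    exact aux_M4e t W key hWent v w a b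
  refine ⟨?_, ?_, ?_, ?_, ?_, ?_⟩
  · rintro ⟨v, a⟩ ⟨w, b⟩
    rw [hE4]
    split <;> simp
  · ext ⟨v, a⟩ ⟨w, b⟩
    rw [Matrix.mul_apply, hE4]
    simp only [hM1, hM3, Matrix.of_apply]
    simpa using aux_13 t W v w a b
  · ext ⟨v, a⟩ ⟨w, b⟩
    rw [Matrix.mul_apply, hE4]
    simp only [hM1, hM3, Matrix.of_apply]
    simpa using aux_31 t W v w a b
  · ext ⟨v, a⟩ ⟨w, b⟩
    rw [Matrix.mul_apply]
    simp only [hM2, hM3, Matrix.of_apply, Matrix.add_apply, Matrix.smul_apply,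
      hE4 v w a b, smul_eq_mul]
    simpa using aux_23 t W key hWent v w a b
  · ext ⟨v, a⟩ ⟨w, b⟩
    rw [Matrix.mul_apply]
    simp only [hM2, hM3, Matrix.of_apply, Matrix.add_apply, Matrix.smul_apply,
      hE4 v w a b, smul_eq_mul]
    simpa using aux_32 t W key hWent v w a b
  · ext ⟨v, a⟩ ⟨w, b⟩
    rw [Matrix.mul_apply]
    simp only [hM0, hM2, hM3, Matrix.of_apply, Matrix.add_apply, Matrix.smul_apply,
      Matrix.one_apply, hE4 v w a b, smul_eq_mul]
    simpa [Prod.ext_iff] using aux_33 t W key hWent hWW v w a b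
end

section
/- In the weighing-matrix setup with t ≥ 3, let P be the {0,1}-matrix on V = (Fin t × Fin 4) × Fin 2 with P[(v,a),(w,b)] = 1 iff v = w. Then for each i ∈ {3,4}, the matrix A = M2 + Mi is a symmetric {0,1}-matrix with zero diagonal satisfying A*J = (4t+2)•J and A*A = (4t+2)•I + 6•(P−I) + (2t+2)•(J−P); that is, A is the adjacency matrix of a proper divisible design graph with parameters (8t, 4t+2, 6, 2t+2, 4t, 2), the canonical partition being into the 4t pairs {(v,0),(v,1)}. -/
open Matrix

namespace WDDG
variable {t : ℕ}

def sg : Fin 2 → ℤ := fun a => if a = 0 then 1 else -1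

lemma sg0 : sg 0 = 1 := by norm_num [sg]
lemma sg1 : sg 1 = -1 := by norm_num [sg]
lemma sg_mul_self (a : Fin 2) : sg a * sg a = 1 := by fin_cases a <;> norm_num [sg]
lemma sg_mul_ne {a b : Fin 2} (h : a ≠ b) : sg a * sg b = -1 := by
  fin_cases a <;> fin_cases b <;> simp_all [sg]

abbrev V (t : ℕ) := (Fin t × Fin 4) × Fin 2

def Pm (t : ℕ) : Matrix (V t) (V t) ℤ := Matrix.of fun x y => if x.1 = y.1 then 1 else 0
def Bm (t : ℕ) : Matrix (V t) (V t) ℤ := Matrix.of fun x y => if x.1.1 = y.1.1 then 1 else 0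
def Jm (t : ℕ) : Matrix (V t) (V t) ℤ := Matrix.of fun _ _ => 1
def Dm (W : Matrix (Fin t × Fin 4) (Fin t × Fin 4) ℤ) : Matrix (V t) (V t) ℤ :=
  Matrix.of fun x y => sg x.2 * W x.1 y.1 * sg y.2

lemma hPP : Pm t * Pm t = (2:ℤ) • Pm t := by
  ext x y
  rw [Matrix.mul_apply, Fintype.sum_prod_type]
  simp only [Fin.sum_univ_two, Pm, Matrix.of_apply]
  have : ∀ w : Fin t × Fin 4,
      (if x.1 = w then (1:ℤ) else 0) * (if w = y.1 then 1 else 0)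
      + (if x.1 = w then (1:ℤ) else 0) * (if w = y.1 then 1 else 0)
      = if w = y.1 then (if x.1 = w then 2 else 0) else 0 := by
    intro w; split_ifs <;> ring
  rw [Finset.sum_congr rfl fun w _ => this w, Finset.sum_ite_eq']
  simp [Matrix.smul_apply]

lemma hBB : Bm t * Bm t = (8:ℤ) • Bm t := by
  ext x y
  rw [Matrix.mul_apply, Fintype.sum_prod_type]
  simp only [Fin.sum_univ_two, Bm, Matrix.of_apply]
  rw [Fintype.sum_prod_type]
  have : ∀ v : Fin t,
      (∑ _q : Fin 4, ((if x.1.1 = v then (1:ℤ) else 0) * (if v = y.1.1 then 1 else 0)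
      + (if x.1.1 = v then (1:ℤ) else 0) * (if v = y.1.1 then 1 else 0)))
      = if v = y.1.1 then (if x.1.1 = v then 8 else 0) else 0 := by
    intro v; rw [Finset.sum_const]; split_ifs <;> simp
  rw [Finset.sum_congr rfl fun v _ => this v, Finset.sum_ite_eq']
  simp [Matrix.smul_apply]

lemma hBP : Bm t * Pm t = (2:ℤ) • Bm t := by
  ext x y
  rw [Matrix.mul_apply, Fintype.sum_prod_type]
  simp only [Fin.sum_univ_two, Bm, Pm, Matrix.of_apply]
  have : ∀ w : Fin t × Fin 4,
      (if x.1.1 = w.1 then (1:ℤ) else 0) * (if w = y.1 then 1 else 0)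
      + (if x.1.1 = w.1 then (1:ℤ) else 0) * (if w = y.1 then 1 else 0)
      = if w = y.1 then (if x.1.1 = w.1 then 2 else 0) else 0 := by
    intro w; split_ifs <;> ring
  rw [Finset.sum_congr rfl fun w _ => this w, Finset.sum_ite_eq']
  simp [Matrix.smul_apply]

lemma hPB : Pm t * Bm t = (2:ℤ) • Bm t := by
  ext x y
  rw [Matrix.mul_apply, Fintype.sum_prod_type]
  simp only [Fin.sum_univ_two, Bm, Pm, Matrix.of_apply]
  have : ∀ w : Fin t × Fin 4,
      (if x.1 = w then (1:ℤ) else 0) * (if w.1 = y.1.1 then 1 else 0)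
      + (if x.1 = w then (1:ℤ) else 0) * (if w.1 = y.1.1 then 1 else 0)
      = if x.1 = w then (if w.1 = y.1.1 then 2 else 0) else 0 := by
    intro w; split_ifs <;> ring
  rw [Finset.sum_congr rfl fun w _ => this w, Finset.sum_ite_eq]
  simp [Matrix.smul_apply]

lemma hPJ : Pm t * Jm t = (2:ℤ) • Jm t := by
  ext x y
  rw [Matrix.mul_apply, Fintype.sum_prod_type]
  simp only [Fin.sum_univ_two, Pm, Jm, Matrix.of_apply]
  have : ∀ w : Fin t × Fin 4,
      (if x.1 = w then (1:ℤ) else 0) * 1 + (if x.1 = w then (1:ℤ) else 0) * 1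
      = if x.1 = w then 2 else 0 := by
    intro w; split_ifs <;> ring
  rw [Finset.sum_congr rfl fun w _ => this w, Finset.sum_ite_eq]
  simp [Matrix.smul_apply]

lemma hJP : Jm t * Pm t = (2:ℤ) • Jm t := by
  ext x y
  rw [Matrix.mul_apply, Fintype.sum_prod_type]
  simp only [Fin.sum_univ_two, Pm, Jm, Matrix.of_apply]
  have : ∀ w : Fin t × Fin 4,
      1 * (if w = y.1 then (1:ℤ) else 0) + 1 * (if w = y.1 then (1:ℤ) else 0)
      = if w = y.1 then 2 else 0 := by
    intro w; split_ifs <;> ring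
  rw [Finset.sum_congr rfl fun w _ => this w, Finset.sum_ite_eq']
  simp [Matrix.smul_apply]

lemma hBJ : Bm t * Jm t = (8:ℤ) • Jm t := by
  ext x y
  rw [Matrix.mul_apply, Fintype.sum_prod_type]
  simp only [Fin.sum_univ_two, Bm, Jm, Matrix.of_apply]
  rw [Fintype.sum_prod_type]
  have : ∀ v : Fin t,
      (∑ _q : Fin 4, ((if x.1.1 = v then (1:ℤ) else 0) * 1 + (if x.1.1 = v then (1:ℤ) else 0) * 1))
      = if x.1.1 = v then 8 else 0 := by
    intro v; rw [Finset.sum_const]; split_ifs <;> simp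
  rw [Finset.sum_congr rfl fun v _ => this v, Finset.sum_ite_eq]
  simp [Matrix.smul_apply]

lemma hJB : Jm t * Bm t = (8:ℤ) • Jm t := by
  ext x y
  rw [Matrix.mul_apply, Fintype.sum_prod_type]
  simp only [Fin.sum_univ_two, Bm, Jm, Matrix.of_apply]
  rw [Fintype.sum_prod_type]
  have : ∀ v : Fin t,
      (∑ _q : Fin 4, ((1:ℤ) * (if v = y.1.1 then 1 else 0) + 1 * (if v = y.1.1 then 1 else 0)))
      = if v = y.1.1 then 8 else 0 := by
    intro v; rw [Finset.sum_const]; split_ifs <;> simp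
  rw [Finset.sum_congr rfl fun v _ => this v, Finset.sum_ite_eq']
  simp [Matrix.smul_apply]

lemma hJJ : Jm t * Jm t = ((8 * t : ℕ) : ℤ) • Jm t := by
  ext x y
  rw [Matrix.mul_apply]
  simp [Jm, Finset.card_univ]
  ring


variable {W : Matrix (Fin t × Fin 4) (Fin t × Fin 4) ℤ}

lemma hDJ : Dm W * Jm t = 0 := by
  ext x y
  rw [Matrix.mul_apply, Fintype.sum_prod_type]
  simp only [Fin.sum_univ_two, Dm, Jm, Matrix.of_apply, Matrix.zero_apply]
  have : ∀ w : Fin t × Fin 4,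
      sg x.2 * W x.1 w * sg 0 * 1 + sg x.2 * W x.1 w * sg 1 * 1 = 0 := by
    intro w; rw [sg0, sg1]; ring
  rw [Finset.sum_congr rfl fun w _ => this w]
  simp

lemma hJD : Jm t * Dm W = 0 := by
  ext x y
  rw [Matrix.mul_apply, Fintype.sum_prod_type]
  simp only [Fin.sum_univ_two, Dm, Jm, Matrix.of_apply, Matrix.zero_apply]
  have : ∀ w : Fin t × Fin 4,
      1 * (sg 0 * W w y.1 * sg y.2) + 1 * (sg 1 * W w y.1 * sg y.2) = 0 := by
    intro w; rw [sg0, sg1]; ring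
  rw [Finset.sum_congr rfl fun w _ => this w]
  simp

lemma hDP : Dm W * Pm t = 0 := by
  ext x y
  rw [Matrix.mul_apply, Fintype.sum_prod_type]
  simp only [Fin.sum_univ_two, Dm, Pm, Matrix.of_apply, Matrix.zero_apply]
  have : ∀ w : Fin t × Fin 4,
      sg x.2 * W x.1 w * sg 0 * (if w = y.1 then (1:ℤ) else 0)
      + sg x.2 * W x.1 w * sg 1 * (if w = y.1 then (1:ℤ) else 0) = 0 := by
    intro w; rw [sg0, sg1]; ring
  rw [Finset.sum_congr rfl fun w _ => this w]
  simp

lemma hPD : Pm t * Dm W = 0 := by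
  ext x y
  rw [Matrix.mul_apply, Fintype.sum_prod_type]
  simp only [Fin.sum_univ_two, Dm, Pm, Matrix.of_apply, Matrix.zero_apply]
  have : ∀ w : Fin t × Fin 4,
      (if x.1 = w then (1:ℤ) else 0) * (sg 0 * W w y.1 * sg y.2)
      + (if x.1 = w then (1:ℤ) else 0) * (sg 1 * W w y.1 * sg y.2) = 0 := by
    intro w; rw [sg0, sg1]; ring
  rw [Finset.sum_congr rfl fun w _ => this w]
  simp

lemma hDB : Dm W * Bm t = 0 := by
  ext x y
  rw [Matrix.mul_apply, Fintype.sum_prod_type]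
  simp only [Fin.sum_univ_two, Dm, Bm, Matrix.of_apply, Matrix.zero_apply]
  have : ∀ w : Fin t × Fin 4,
      sg x.2 * W x.1 w * sg 0 * (if w.1 = y.1.1 then (1:ℤ) else 0)
      + sg x.2 * W x.1 w * sg 1 * (if w.1 = y.1.1 then (1:ℤ) else 0) = 0 := by
    intro w; rw [sg0, sg1]; ring
  rw [Finset.sum_congr rfl fun w _ => this w]
  simp

lemma hBD : Bm t * Dm W = 0 := by
  ext x y
  rw [Matrix.mul_apply, Fintype.sum_prod_type]
  simp only [Fin.sum_univ_two, Dm, Bm, Matrix.of_apply, Matrix.zero_apply]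
  have : ∀ w : Fin t × Fin 4,
      (if x.1.1 = w.1 then (1:ℤ) else 0) * (sg 0 * W w y.1 * sg y.2)
      + (if x.1.1 = w.1 then (1:ℤ) else 0) * (sg 1 * W w y.1 * sg y.2) = 0 := by
    intro w; rw [sg0, sg1]; ring
  rw [Finset.sum_congr rfl fun w _ => this w]
  simp

lemma hDD (hWW : W * W = (4 * ((t : ℤ) - 1)) • (1 : Matrix (Fin t × Fin 4) (Fin t × Fin 4) ℤ)) :
    Dm W * Dm W = (8 * ((t:ℤ) - 1)) • ((2:ℤ) • (1 : Matrix (V t) (V t) ℤ) - Pm t) := by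
  have hWWe : ∀ u w, (∑ z, W u z * W z w) = if u = w then 4 * ((t:ℤ) - 1) else 0 := by
    intro u w
    have h := congrFun (congrFun hWW u) w
    simpa [Matrix.mul_apply, Matrix.one_apply, Matrix.smul_apply, mul_ite] using h
  ext x y
  rw [Matrix.mul_apply, Fintype.sum_prod_type]
  simp only [Fin.sum_univ_two, Dm, Matrix.of_apply]
  have : ∀ w : Fin t × Fin 4,
      sg x.2 * W x.1 w * sg 0 * (sg 0 * W w y.1 * sg y.2)
      + sg x.2 * W x.1 w * sg 1 * (sg 1 * W w y.1 * sg y.2)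
      = (2 * (sg x.2 * sg y.2)) * (W x.1 w * W w y.1) := by
    intro w; rw [sg0, sg1]; ring
  rw [Finset.sum_congr rfl fun w _ => this w, ← Finset.mul_sum, hWWe]
  simp only [Matrix.smul_apply, Matrix.sub_apply, Matrix.one_apply, Pm, Matrix.of_apply,
    smul_eq_mul]
  by_cases h1 : x.1 = y.1
  · by_cases h2 : x.2 = y.2
    · have hxy : x = y := Prod.ext h1 h2
      rw [show sg x.2 * sg y.2 = 1 by rw [h2]; exact sg_mul_self y.2]
      simp [hxy]; ring
    · have hxy : x ≠ y := fun h => h2 (by rw [h])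
      rw [sg_mul_ne h2]
      simp [h1, hxy]; ring
  · have hxy : x ≠ y := fun h => h1 (by rw [h])
    simp [h1, hxy]


lemma smul_cancel {n : Type*} {k : ℤ} (hk : k ≠ 0) {X Y : Matrix n n ℤ}
    (h : k • X = k • Y) : X = Y := by
  ext i j
  have h2 : k * X i j = k * Y i j := by
    have := congrFun (congrFun h i) j
    simpa using this
  exact mul_left_cancel₀ hk h2

lemma W_unit (hWsymm : Wᵀ = W)
    (hWent : ∀ u w, W u w = -1 ∨ W u w = 0 ∨ W u w = 1)
    (hWW : W * W = (4 * ((t : ℤ) - 1)) • (1 : Matrix (Fin t × Fin 4) (Fin t × Fin 4) ℤ))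
    (hWdiag : ∀ u w : Fin t × Fin 4, u.1 = w.1 → W u w = 0) :
    ∀ u w, u.1 ≠ w.1 → W u w = 1 ∨ W u w = -1 := by
  intro u w0 hne
  by_contra hc
  push_neg at hc
  have h0 : W u w0 = 0 := by rcases hWent u w0 with h|h|h <;> tauto
  have hWs : ∀ w, W w u = W u w := by
    intro w
    have := congrFun (congrFun hWsymm u) w
    simpa using this
  have hdiagsum : ∑ w, W u w * W w u = 4 * ((t:ℤ) - 1) := by
    have h := congrFun (congrFun hWW u) u
    simpa [Matrix.mul_apply, Matrix.one_apply, Matrix.smul_apply] using h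
  set g : Fin t × Fin 4 → ℤ := fun w => if w.1 = u.1 then 0 else 1 with hg
  have hgsum : ∑ w, g w = 4 * ((t:ℤ) - 1) := by
    rw [Fintype.sum_prod_type]
    have h1 : ∀ v : Fin t, (∑ _q : Fin 4, g (v, _q)) = if v = u.1 then 0 else 4 := by
      intro v
      simp only [hg]
      split_ifs <;> simp
    rw [Finset.sum_congr rfl fun v _ => h1 v]
    have h2 : ∀ v : Fin t, (if v = u.1 then (0:ℤ) else 4) = 4 - (if v = u.1 then 4 else 0) := by
      intro v; split_ifs <;> ring
    rw [Finset.sum_congr rfl fun v _ => h2 v, Finset.sum_sub_distrib, Finset.sum_ite_eq']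
    simp [Finset.card_univ]; ring
  have hb : ∀ w ∈ Finset.univ.erase w0, W u w * W w u ≤ g w := by
    intro w _
    rw [hWs w]
    by_cases h : w.1 = u.1
    · rw [hWdiag u w h.symm]; simp [hg, h]
    · rcases hWent u w with h1|h1|h1 <;> simp [hg, h, h1]
  have hsum_erase : ∑ w ∈ Finset.univ.erase w0, W u w * W w u = 4*((t:ℤ)-1) := by
    rw [Finset.sum_erase _ (by rw [h0]; ring)]
    exact hdiagsum
  have hgsum_erase : ∑ w ∈ Finset.univ.erase w0, g w = 4*((t:ℤ)-1) - 1 := by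
    rw [Finset.sum_erase_eq_sub (Finset.mem_univ w0), hgsum]
    have : g w0 = 1 := if_neg (fun h => hne h.symm)
    rw [this]
  have hle := Finset.sum_le_sum hb
  rw [hsum_erase, hgsum_erase] at hle
  linarith

end WDDG


open WDDG in
/-- in the weighing-matrix setup with `t ≥ 3` and `P` the matrix of the
partition into the `4t` pairs `{(v,0),(v,1)}`, for each `i ∈ {3,4}` the matrix
`A = M2 + Mi` is the adjacency matrix of a proper divisible design graph with
parameters `(8t, 4t+2, 6, 2t+2, 4t, 2)` and class matrix `P`. -/
theorem weighing_matrix_ddg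
    (t : ℕ) (ht : 3 ≤ t)
    (W : Matrix (Fin t × Fin 4) (Fin t × Fin 4) ℤ)
    (hWsymm : Wᵀ = W)
    (hWent : ∀ u w, W u w = -1 ∨ W u w = 0 ∨ W u w = 1)
    (hWW : W * W = (4 * ((t : ℤ) - 1)) • (1 : Matrix (Fin t × Fin 4) (Fin t × Fin 4) ℤ))
    (hWdiag : ∀ u w : Fin t × Fin 4, u.1 = w.1 → W u w = 0)
    (M0 M1 M2 M3 M4 J P : Matrix ((Fin t × Fin 4) × Fin 2) ((Fin t × Fin 4) × Fin 2) ℤ)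
    (hM0 : M0 = 1)
    (hM1 : M1 = Matrix.of fun pq rs =>
      if pq.1 = rs.1 ∧ pq.2 ≠ rs.2 then 1 else 0)
    (hM2 : M2 = Matrix.of fun pq rs =>
      if pq.1 ≠ rs.1 ∧ pq.1.1 = rs.1.1 then 1 else 0)
    (hM3 : M3 = Matrix.of fun pq rs =>
      if (W pq.1 rs.1 = 1 ∧ pq.2 = rs.2) ∨ (W pq.1 rs.1 = -1 ∧ pq.2 ≠ rs.2)
        then 1 else 0)
    (hJ : J = Matrix.of fun _ _ => 1)
    (hM4 : M4 = J - M0 - M1 - M2 - M3)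
    (hP : P = Matrix.of fun pq rs => if pq.1 = rs.1 then 1 else 0) :
    Fintype.card ((Fin t × Fin 4) × Fin 2) = 8 * t ∧
    Pᵀ = P ∧ (∀ x y, P x y = 0 ∨ P x y = 1) ∧ (∀ x, P x x = 1) ∧
    P * P = (2 : ℤ) • P ∧
    (∀ A : Matrix ((Fin t × Fin 4) × Fin 2) ((Fin t × Fin 4) × Fin 2) ℤ,
      A = M2 + M3 ∨ A = M2 + M4 →
      Aᵀ = A ∧
      (∀ x y, A x y = 0 ∨ A x y = 1) ∧
      (∀ x, A x x = 0) ∧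
      A * J = ((4 * t + 2 : ℕ) : ℤ) • J ∧
      A * A = ((4 * t + 2 : ℕ) : ℤ) • M0 + (6 : ℤ) • (P - M0)
          + ((2 * t + 2 : ℕ) : ℤ) • (J - P)) ∧
    (6 : ℕ) ≠ 2 * t + 2 ∧ 1 < 4 * t ∧ 1 < 2 := by
  have hW1 := WDDG.W_unit hWsymm hWent hWW hWdiag
  have hWs : ∀ u w, W w u = W u w := fun u w => by
    simpa using congrFun (congrFun hWsymm u) w
  have hPeq : P = Pm t := hP.trans rfl
  have hJeq : J = Jm t := hJ.trans rfl
  -- structural identities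
  have hsumB : M0 + M1 + M2 = Bm t := by
    ext x y
    simp only [hM0, hM1, hM2, Bm, Matrix.add_apply, Matrix.one_apply, Matrix.of_apply]
    by_cases h1 : x.1 = y.1
    · have hb : x.1.1 = y.1.1 := by rw [h1]
      by_cases h2 : x.2 = y.2
      · have hxy : x = y := Prod.ext h1 h2
        simp [hxy, h1, h2, hb]
      · have hxy : x ≠ y := fun h => h2 (by rw [h])
        simp [hxy, h1, h2, hb]
    · have hxy : x ≠ y := fun h => h1 (by rw [h])
      simp [hxy, h1]
  have hM2eq : M2 = Bm t - Pm t := by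
    ext x y
    simp only [hM2, Bm, Pm, Matrix.of_apply, Matrix.sub_apply]
    by_cases h1 : x.1 = y.1
    · have hb : x.1.1 = y.1.1 := by rw [h1]
      simp [h1, hb]
    · simp [h1]
  have h2M3 : (2:ℤ) • M3 = (Jm t - Bm t) + Dm W := by
    ext x y
    simp only [hM3, Jm, Bm, Dm, Matrix.add_apply, Matrix.sub_apply,
      Matrix.smul_apply, Matrix.of_apply, smul_eq_mul]
    rw [show sg x.2 * W x.1 y.1 * sg y.2 = sg x.2 * sg y.2 * W x.1 y.1 from by ring]
    by_cases hb : x.1.1 = y.1.1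
    · rw [hWdiag x.1 y.1 hb]
      norm_num [hb]
    · by_cases h2 : x.2 = y.2
      · have hs : sg x.2 * sg y.2 = 1 := by rw [h2]; exact sg_mul_self y.2
        rcases hW1 x.1 y.1 hb with h|h <;> rw [hs, h] <;> norm_num [hb, h2]
      · have hs : sg x.2 * sg y.2 = -1 := sg_mul_ne h2
        rcases hW1 x.1 y.1 hb with h|h <;> rw [hs, h] <;> norm_num [hb, h2]
  have hM4eq : M4 = Jm t - Bm t - M3 := by
    rw [hM4, hJeq, ← hsumB]; abel
  have h2M4 : (2:ℤ) • M4 = (Jm t - Bm t) - Dm W := by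
    rw [hM4eq, smul_sub, smul_sub, h2M3]
    abel
  -- symmetry lemmas
  have hPsymm : Pᵀ = P := by
    ext x y
    rw [Matrix.transpose_apply, hP]
    simp only [Matrix.of_apply]
    exact if_congr eq_comm rfl rfl
  have hM2symm : M2ᵀ = M2 := by
    ext x y
    rw [Matrix.transpose_apply, hM2]
    simp only [Matrix.of_apply]
    refine if_congr ?_ rfl rfl
    constructor <;> rintro ⟨a, b⟩ <;> exact ⟨a.symm ∘ Eq.symm ∘ Eq.symm, b.symm⟩
  have hM3symm : M3ᵀ = M3 := by
    ext x y
    rw [Matrix.transpose_apply, hM3]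
    simp only [Matrix.of_apply, hWs y.1 x.1]
    refine if_congr ?_ rfl rfl
    constructor <;> rintro (⟨a, b⟩|⟨a, b⟩)
    · exact Or.inl ⟨a, b.symm⟩
    · exact Or.inr ⟨a, fun h => b h.symm⟩
    · exact Or.inl ⟨a, b.symm⟩
    · exact Or.inr ⟨a, fun h => b h.symm⟩
  have hM1symm : M1ᵀ = M1 := by
    ext x y
    rw [Matrix.transpose_apply, hM1]
    simp only [Matrix.of_apply]
    refine if_congr ?_ rfl rfl
    constructor <;> rintro ⟨a, b⟩ <;> exact ⟨a.symm, fun h => b h.symm⟩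
  have hJsymm : Jᵀ = J := by
    ext x y
    rw [Matrix.transpose_apply, hJ]
    rfl
  have hM4symm : M4ᵀ = M4 := by
    rw [hM4]
    simp only [Matrix.transpose_sub, hJsymm, hM1symm, hM2symm, hM3symm, hM0,
      Matrix.transpose_one]
  -- entry facts
  have hM3same : ∀ x y : (Fin t × Fin 4) × Fin 2, x.1.1 = y.1.1 → M3 x y = 0 := by
    intro x y hb
    rw [hM3]
    simp only [Matrix.of_apply, hWdiag x.1 y.1 hb]
    norm_num
  have hM2diff : ∀ x y : (Fin t × Fin 4) × Fin 2, x.1.1 ≠ y.1.1 → M2 x y = 0 := by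
    intro x y hb
    rw [hM2]
    simp [hb]
  refine ⟨by simp; ring, hPsymm, ?_, ?_, ?_, ?_, by omega, by omega, by norm_num⟩
  · intro x y
    rw [hP]
    simp only [Matrix.of_apply]
    split_ifs <;> simp
  · intro x
    simp [hP]
  · rw [hPeq]; exact hPP
  · intro A hA
    have h2A : (2:ℤ) • A = Jm t + Bm t - (2:ℤ) • Pm t + Dm W ∨
        (2:ℤ) • A = Jm t + Bm t - (2:ℤ) • Pm t - Dm W := by
      rcases hA with h | h
      · left
        rw [h, smul_add, h2M3, hM2eq, smul_sub]
        abel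
      · right
        rw [h, smul_add, h2M4, hM2eq, smul_sub]
        abel
    constructor
    · -- symmetry
      rcases hA with h | h <;> rw [h, Matrix.transpose_add, hM2symm]
      · rw [hM3symm]
      · rw [hM4symm]
    refine ⟨?_, ?_, ?_, ?_⟩
    · -- entries
      intro x y
      rcases hA with h | h <;> rw [h, Matrix.add_apply]
      · by_cases hb : x.1.1 = y.1.1
        · rw [hM3same x y hb, add_zero, hM2]
          simp only [Matrix.of_apply]
          split_ifs <;> simp
        · rw [hM2diff x y hb, zero_add, hM3]
          simp only [Matrix.of_apply]
          split_ifs <;> simp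
      · rw [hM4eq]
        by_cases hb : x.1.1 = y.1.1
        · have : (Jm t - Bm t - M3) x y = 0 := by
            simp [Matrix.sub_apply, Jm, Bm, hb, hM3same x y hb]
          rw [this, add_zero, hM2]
          simp only [Matrix.of_apply]
          split_ifs <;> simp
        · rw [hM2diff x y hb, zero_add]
          simp only [Matrix.sub_apply, Jm, Bm, Matrix.of_apply, hM3]
          rw [if_neg hb]
          split_ifs <;> simp
    · -- diagonal
      intro x
      have h2 : M2 x x = 0 := by rw [hM2]; simp
      have h3 : M3 x x = 0 := hM3same x x rfl
      have h4 : M4 x x = 0 := by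
        rw [hM4eq, Matrix.sub_apply, Matrix.sub_apply, h3]
        simp [Jm, Bm]
      rcases hA with h | h <;> rw [h, Matrix.add_apply, h2] <;> simp [h3, h4]
    · -- A * J
      have key : (2:ℤ) • (A * J) = (2:ℤ) • (((4 * t + 2 : ℕ) : ℤ) • J) := by
        rw [hJeq]
        have e1 : (2:ℤ) • (A * Jm t) = ((2:ℤ) • A) * Jm t := (smul_mul_assoc _ _ _).symm
        rw [e1]
        rcases h2A with h | h <;> rw [h] <;>
          simp only [add_mul, sub_mul, smul_mul_assoc, hJJ, hBJ, hPJ, hDJ,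
            smul_zero, sub_zero, smul_smul, add_zero, zero_add] <;>
          push_cast <;> module
      exact WDDG.smul_cancel (by norm_num) key
    · -- A * A
      rw [hM0, hPeq, hJeq]
      have key : (4:ℤ) • (A * A) = (4:ℤ) • (((4 * t + 2 : ℕ) : ℤ) • (1 : Matrix ((Fin t × Fin 4) × Fin 2) ((Fin t × Fin 4) × Fin 2) ℤ)
          + (6:ℤ) • (Pm t - 1) + ((2 * t + 2 : ℕ) : ℤ) • (Jm t - Pm t)) := by
        have e1 : (4:ℤ) • (A * A) = ((2:ℤ) • A) * ((2:ℤ) • A) := by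
          rw [smul_mul_assoc, mul_smul_comm, smul_smul]
          norm_num
        rw [e1]
        rcases h2A with h | h <;> rw [h] <;>
          simp only [add_mul, mul_add, sub_mul, mul_sub, smul_mul_assoc, mul_smul_comm,
            hJJ, hJB, hJP, hJD, hBJ, hBB, hBP, hBD, hPJ, hPB, hPP, hPD,
            hDJ, hDB, hDP, hDD hWW, smul_zero, mul_zero, zero_mul, sub_zero,
            add_zero, zero_add, zero_sub, smul_smul, smul_neg, neg_zero, smul_sub, smul_add] <;>
          push_cast <;> module
      exact WDDG.smul_cancel (by norm_num) key
end

section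
/- Let A be a finite abelian group, N ≤ A a proper nontrivial subgroup, and D ⊆ A a divisible difference set relative to N with parameters (m,n,k,λ1,λ2), m, n > 1, satisfying the intersection condition. Let G = Dih(A) with reflecting element b, and set X1 = N\{1}, X2 = A\N, X3 = Db, X4 = (A\D)b ⊆ G. Then each of the sets {1_G}, X1, X2, X3, X4 is inverse-closed in G, and the ℤ-submodule of the group algebra MonoidAlgebra ℤ G spanned by the five elements underline({1_G}), underline(X1), underline(X2), underline(X3), underline(X4) is closed under multiplication (i.e. it is a subring of MonoidAlgebra ℤ G, an S-ring of rank 5 over G). -/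
set_option linter.unusedSectionVars false
set_option maxHeartbeats 1000000


open Classical

/-- `underline Y = Σ_{y ∈ Y} y` in the group algebra `MonoidAlgebra ℤ G`. -/
noncomputable def underline {G : Type*} [Group G] [Fintype G] (Y : Set G) :
    MonoidAlgebra ℤ G :=
  ∑ y ∈ Y.toFinset, MonoidAlgebra.single y (1 : ℤ)

section Helpers
variable {A : Type*} [CommGroup A] [Fintype A] [DecidableEq A]
variable {G : Type*} [Group G] [Fintype G]

noncomputable def nfun (ι : A →* G) (f : A → ℤ) : MonoidAlgebra ℤ G :=
  ∑ a : A, f a • MonoidAlgebra.single (ι a) (1 : ℤ)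

variable (ι : A →* G)

lemma underline_image (hinj : Function.Injective ι) (Y : Set A) :
    underline (ι '' Y) = ∑ a ∈ Y.toFinset, MonoidAlgebra.single (ι a) (1 : ℤ) := by
  rw [underline, Set.toFinset_image, Finset.sum_image (fun x _ y _ h => hinj h)]

lemma nfun_ind (hinj : Function.Injective ι) (W : Set A) :
    nfun ι (fun a => if a ∈ W then 1 else 0) = underline (ι '' W) := by
  rw [underline_image ι hinj, nfun]
  simp only [ite_smul, one_smul, zero_smul]
  rw [← Finset.sum_filter]
  congr 1
  ext a; simp

lemma nfun_congr (f g : A → ℤ) (h : ∀ a, f a = g a) : nfun ι f = nfun ι g := by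
  unfold nfun; exact Finset.sum_congr rfl fun a _ => by rw [h a]

lemma nfun_add (f g : A → ℤ) : nfun ι (fun a => f a + g a) = nfun ι f + nfun ι g := by
  unfold nfun; rw [← Finset.sum_add_distrib]
  exact Finset.sum_congr rfl fun a _ => add_smul _ _ _

lemma nfun_const_mul (c : ℤ) (f : A → ℤ) : nfun ι (fun a => c * f a) = c • nfun ι f := by
  unfold nfun; rw [Finset.smul_sum]
  exact Finset.sum_congr rfl fun a _ => mul_smul _ _ _

/-- master product formula -/
lemma underline_mul_underline (hinj : Function.Injective ι) (Y Z : Set A) :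
    underline (ι '' Y) * underline (ι '' Z)
      = nfun ι (fun a =>
          (((Y.toFinset ×ˢ Z.toFinset).filter fun p : A × A => p.1 * p.2 = a).card : ℤ)) := by
  rw [underline_image ι hinj, underline_image ι hinj, Finset.sum_mul_sum]
  simp only [MonoidAlgebra.single_mul_single, one_mul, ← map_mul]
  rw [← Finset.sum_product', nfun,
    ← Finset.sum_fiberwise_of_maps_to (g := fun p : A × A => p.1 * p.2)
      (t := (Finset.univ : Finset A)) (fun p _ => Finset.mem_univ _)]
  refine Finset.sum_congr rfl fun a _ => ?_
  rw [Finset.sum_congr rfl (fun p hp => by rw [(Finset.mem_filter.mp hp).2]),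
    Finset.sum_const, natCast_zsmul]

/-- counting: project to first coordinate -/
lemma cnt_fst (Y Z : Set A) (a : A) :
    ((Y.toFinset ×ˢ Z.toFinset).filter fun p : A × A => p.1 * p.2 = a).card
      = (Y.toFinset.filter fun y => y⁻¹ * a ∈ Z).card := by
  refine Finset.card_nbij' (fun p => p.1) (fun y => (y, y⁻¹ * a)) ?_ ?_ ?_ ?_
  · rintro ⟨y, z⟩ hp
    simp only [Finset.mem_coe, Finset.mem_filter, Finset.mem_product, Set.mem_toFinset] at hp ⊢
    obtain ⟨⟨h1, h2⟩, h3⟩ := hp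
    refine ⟨h1, ?_⟩
    rw [← h3]; simpa using h2
  · intro y hy
    simp only [Finset.mem_coe, Finset.mem_filter, Finset.mem_product, Set.mem_toFinset] at hy ⊢
    exact ⟨⟨hy.1, hy.2⟩, by group⟩
  · rintro ⟨y, z⟩ hp
    simp only [Finset.mem_coe, Finset.mem_filter, Finset.mem_product, Set.mem_toFinset] at hp
    have : z = y⁻¹ * a := by rw [← hp.2]; group
    simp [this]
  · intro y _; rfl

lemma cnt_snd (Y Z : Set A) (a : A) :
    ((Y.toFinset ×ˢ Z.toFinset).filter fun p : A × A => p.1 * p.2 = a).card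
      = (Z.toFinset.filter fun z => a * z⁻¹ ∈ Y).card := by
  refine Finset.card_nbij' (fun p => p.2) (fun z => (a * z⁻¹, z)) ?_ ?_ ?_ ?_
  · rintro ⟨y, z⟩ hp
    simp only [Finset.mem_coe, Finset.mem_filter, Finset.mem_product, Set.mem_toFinset] at hp ⊢
    obtain ⟨⟨h1, h2⟩, h3⟩ := hp
    refine ⟨h2, ?_⟩
    rw [← h3]; simpa using h1
  · intro z hz
    simp only [Finset.mem_coe, Finset.mem_filter, Finset.mem_product, Set.mem_toFinset] at hz ⊢
    exact ⟨⟨hz.2, hz.1⟩, by group⟩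
  · rintro ⟨y, z⟩ hp
    simp only [Finset.mem_coe, Finset.mem_filter, Finset.mem_product, Set.mem_toFinset] at hp
    have : y = a * z⁻¹ := by rw [← hp.2]; group
    simp [this]
  · intro z _; rfl

lemma underline_mul_single' (Y : Set G) (g : G) :
    underline Y * MonoidAlgebra.single g (1:ℤ) = underline ((· * g) '' Y) := by
  rw [underline, underline, Set.toFinset_image,
    Finset.sum_image (fun x _ y _ h => mul_right_cancel h), Finset.sum_mul]
  simp [MonoidAlgebra.single_mul_single]

lemma single_mul_underline' (Y : Set G) (g : G) :
    MonoidAlgebra.single g (1:ℤ) * underline Y = underline ((g * ·) '' Y) := by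
  rw [underline, underline, Set.toFinset_image,
    Finset.sum_image (fun x _ y _ h => mul_left_cancel h), Finset.mul_sum]
  simp [MonoidAlgebra.single_mul_single]

lemma nfun_const (hinj : Function.Injective ι) (c : ℤ) :
    nfun ι (fun _ => c) = c • underline (ι '' (Set.univ : Set A)) := by
  rw [← nfun_ind ι hinj, ← nfun_const_mul]
  exact nfun_congr ι _ _ (by simp)

lemma mul_univ_right (hinj : Function.Injective ι) (Y : Set A) :
    underline (ι '' Y) * underline (ι '' (Set.univ : Set A))
      = ((Nat.card Y : ℕ) : ℤ) • underline (ι '' (Set.univ : Set A)) := by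
  rw [underline_mul_underline ι hinj, ← nfun_const ι hinj]
  refine nfun_congr ι _ _ fun a => ?_
  rw [cnt_fst, Nat.card_coe_set_eq, Set.ncard_eq_toFinset_card']
  congr 2
  simp

lemma univ_mul_left (hinj : Function.Injective ι) (Y : Set A) :
    underline (ι '' (Set.univ : Set A)) * underline (ι '' Y)
      = ((Nat.card Y : ℕ) : ℤ) • underline (ι '' (Set.univ : Set A)) := by
  rw [underline_mul_underline ι hinj, ← nfun_const ι hinj]
  refine nfun_congr ι _ _ fun a => ?_
  rw [cnt_snd, Nat.card_coe_set_eq, Set.ncard_eq_toFinset_card']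
  congr 2
  simp

lemma natcard_filter (p : A → Prop) :
    Nat.card {x : A // p x} = (Finset.univ.filter p).card := by
  rw [Nat.card_eq_fintype_card, Fintype.card_subtype]

lemma filter_toFinset_card (Y : Set A) (p : A → Prop) :
    (Y.toFinset.filter p).card = Nat.card {y : A // y ∈ Y ∧ p y} := by
  rw [natcard_filter]
  congr 1
  ext y
  simp

lemma mul_N_right (hinj : Function.Injective ι) (N : Subgroup A) (Y : Set A) (c : ℕ)
    (hcnt : ∀ a : A, Nat.card {y : A // y ∈ Y ∧ y * a⁻¹ ∈ N} = c) :
    underline (ι '' Y) * underline (ι '' (N : Set A))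
      = (c : ℤ) • underline (ι '' (Set.univ : Set A)) := by
  rw [underline_mul_underline ι hinj, ← nfun_const ι hinj]
  refine nfun_congr ι _ _ fun a => ?_
  rw [cnt_fst]
  have hiff : ∀ y : A, y⁻¹ * a ∈ N ↔ y * a⁻¹ ∈ N := fun y => by
    rw [show y⁻¹ * a = (y * a⁻¹)⁻¹ by rw [mul_inv_rev, inv_inv, mul_comm], inv_mem_iff]
  simp only [SetLike.mem_coe, hiff]
  rw [filter_toFinset_card, hcnt a]

lemma N_mul_left (hinj : Function.Injective ι) (N : Subgroup A) (Y : Set A) (c : ℕ)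
    (hcnt : ∀ a : A, Nat.card {y : A // y ∈ Y ∧ y * a⁻¹ ∈ N} = c) :
    underline (ι '' (N : Set A)) * underline (ι '' Y)
      = (c : ℤ) • underline (ι '' (Set.univ : Set A)) := by
  rw [underline_mul_underline ι hinj, ← nfun_const ι hinj]
  refine nfun_congr ι _ _ fun a => ?_
  rw [cnt_snd]
  have hiff : ∀ y : A, a * y⁻¹ ∈ N ↔ y * a⁻¹ ∈ N := fun y => by
    rw [show a * y⁻¹ = (y * a⁻¹)⁻¹ by rw [mul_inv_rev, inv_inv], inv_mem_iff]
  simp only [SetLike.mem_coe, hiff]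
  rw [filter_toFinset_card, hcnt a]

lemma cnt_N_self (N : Subgroup A) (a : A) :
    ((N : Set A).toFinset.filter fun y => y * a⁻¹ ∈ N).card
      = if a ∈ N then (N : Set A).toFinset.card else 0 := by
  by_cases ha : a ∈ N
  · rw [if_pos ha]
    congr 1
    apply Finset.filter_true_of_mem
    intro y hy
    rw [Set.mem_toFinset, SetLike.mem_coe] at hy
    exact N.mul_mem hy (N.inv_mem ha)
  · rw [if_neg ha, Finset.card_eq_zero, Finset.filter_eq_empty_iff]
    intro y hy hmem
    rw [Set.mem_toFinset, SetLike.mem_coe] at hy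
    exact ha (by
      have := N.mul_mem (N.inv_mem hy) hmem
      simpa [mul_assoc, inv_mem_iff] using (N.inv_mem this))

lemma cnt_univ_N (N : Subgroup A) (a : A) :
    (Finset.univ.filter fun y : A => y * a⁻¹ ∈ N).card = Nat.card N := by
  rw [Nat.card_eq_fintype_card, Fintype.card_subtype]
  refine Finset.card_nbij' (fun y => y * a⁻¹) (fun h => h * a) ?_ ?_ ?_ ?_
  · intro y hy
    simp only [Finset.mem_coe, Finset.mem_filter, Finset.mem_univ, true_and] at hy ⊢
    exact hy
  · intro h hh
    simp only [Finset.mem_coe, Finset.mem_filter, Finset.mem_univ, true_and] at hh ⊢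
    simpa [mul_assoc] using hh
  · intro y _; group
  · intro h _; group

lemma N_mul_N (hinj : Function.Injective ι) (N : Subgroup A) :
    underline (ι '' (N : Set A)) * underline (ι '' (N : Set A))
      = ((Nat.card (N : Set A) : ℕ) : ℤ) • underline (ι '' (N : Set A)) := by
  rw [Nat.card_coe_set_eq, Set.ncard_eq_toFinset_card']
  rw [underline_mul_underline ι hinj, ← nfun_ind ι hinj, ← nfun_const_mul]
  refine nfun_congr ι _ _ fun a => ?_
  rw [cnt_fst]
  have hiff : ∀ y : A, y⁻¹ * a ∈ N ↔ y * a⁻¹ ∈ N := fun y => by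
    rw [show y⁻¹ * a = (y * a⁻¹)⁻¹ by rw [mul_inv_rev, inv_inv, mul_comm], inv_mem_iff]
  simp only [SetLike.mem_coe, hiff]
  rw [cnt_N_self]
  by_cases ha : a ∈ N <;> simp [ha]

lemma natcard_pairs (D : Set A) (a : A) :
    Nat.card {pr : A × A // pr.1 ∈ D ∧ pr.2 ∈ D ∧ pr.1 * pr.2⁻¹ = a}
      = (D.toFinset.filter fun y => y * a⁻¹ ∈ D).card := by
  rw [Nat.card_eq_fintype_card, Fintype.card_subtype]
  refine Finset.card_nbij' (fun pr => pr.1) (fun d => (d, d * a⁻¹)) ?_ ?_ ?_ ?_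
  · rintro ⟨y, z⟩ hp
    simp only [Finset.mem_coe, Finset.mem_filter, Finset.mem_univ, true_and, Set.mem_toFinset] at hp ⊢
    obtain ⟨h1, h2, h3⟩ := hp
    refine ⟨h1, ?_⟩
    have : z = y * a⁻¹ := by rw [← h3, mul_inv_rev, inv_inv, mul_comm y, mul_assoc, inv_mul_cancel, mul_one]
    rwa [← this]
  · intro d hd
    simp only [Finset.mem_coe, Finset.mem_filter, Finset.mem_univ, true_and, Set.mem_toFinset] at hd ⊢
    exact ⟨hd.1, hd.2, by rw [mul_inv_rev, inv_inv, mul_comm a, ← mul_assoc, mul_inv_cancel, one_mul]⟩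
  · rintro ⟨y, z⟩ hp
    simp only [Finset.mem_coe, Finset.mem_filter, Finset.mem_univ, true_and, Set.mem_toFinset] at hp
    have : z = y * a⁻¹ := by rw [← hp.2.2, mul_inv_rev, inv_inv, mul_comm y, mul_assoc, inv_mul_cancel, mul_one]
    simp [this]
  · intro d _; rfl

lemma underline_one : underline ({(1 : G)} : Set G) = 1 := by
  simp [underline, MonoidAlgebra.one_def]

lemma underline_union_disjoint (Y Z : Set G) (h : Disjoint Y Z) :
    underline (Y ∪ Z) = underline Y + underline Z := by
  rw [underline, underline, underline, Set.toFinset_union,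
    Finset.sum_union (by simpa [Finset.disjoint_left, Set.disjoint_left] using h)]

lemma beta_sq (b : G) (hb2 : b * b = 1) :
    MonoidAlgebra.single b (1:ℤ) * MonoidAlgebra.single b 1 = 1 := by
  simp [MonoidAlgebra.single_mul_single, hb2, MonoidAlgebra.one_def]

lemma beta_conj (b : G) (hb2 : b * b = 1) (hbconj : ∀ a : A, b * ι a * b⁻¹ = ι a⁻¹)
    (Y : Set A) :
    MonoidAlgebra.single b (1:ℤ) * underline (ι '' Y)
      = underline (ι '' (Inv.inv '' Y)) * MonoidAlgebra.single b 1 := by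
  rw [single_mul_underline', underline_mul_single']
  congr 1
  rw [Set.image_image, Set.image_image, Set.image_image]
  refine Set.image_congr fun a _ => ?_
  have hbinv : b⁻¹ = b := inv_eq_of_mul_eq_one_right hb2
  have h := hbconj a
  rw [hbinv] at h
  rw [← h, mul_assoc, hb2, mul_one]

lemma D_mul_Dinv (hinj : Function.Injective ι) (N : Subgroup A) (D : Set A) (l1 l2 : ℕ)
    (hdds : ∀ g : A, g ≠ 1 →
      Nat.card {pr : A × A // pr.1 ∈ D ∧ pr.2 ∈ D ∧ pr.1 * pr.2⁻¹ = g}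
        = if g ∈ N then l1 else l2) :
    underline (ι '' D) * underline (ι '' (Inv.inv '' D))
      = (((Nat.card D : ℕ) : ℤ) - l1) • underline (ι '' ({1} : Set A))
        + (((l1 : ℤ) - l2) • underline (ι '' (N : Set A))
        + (l2 : ℤ) • underline (ι '' (Set.univ : Set A))) := by
  rw [Nat.card_coe_set_eq, Set.ncard_eq_toFinset_card']
  rw [underline_mul_underline ι hinj, ← nfun_ind ι hinj ({1} : Set A),
    ← nfun_ind ι hinj ((N : Set A)), ← nfun_ind ι hinj (Set.univ : Set A),
    ← nfun_const_mul, ← nfun_const_mul, ← nfun_const_mul, ← nfun_add, ← nfun_add]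
  refine nfun_congr ι _ _ fun a => ?_
  rw [cnt_fst]
  have hiff : ∀ y : A, (y⁻¹ * a ∈ Inv.inv '' D) ↔ (y * a⁻¹ ∈ D) := fun y => by
    constructor
    · rintro ⟨d, hd, hdy⟩
      have : d = y * a⁻¹ := by rw [← inv_inv d, hdy, mul_inv_rev, inv_inv, mul_comm]
      rwa [← this]
    · intro h
      exact ⟨y * a⁻¹, h, by rw [mul_inv_rev, inv_inv, mul_comm]⟩
  simp only [hiff]
  by_cases ha1 : a = 1
  · subst ha1
    rw [Finset.filter_true_of_mem (fun y hy => by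
      simpa using (Set.mem_toFinset.mp hy) : ∀ y ∈ D.toFinset, y * (1:A)⁻¹ ∈ D)]
    simp only [Set.mem_singleton_iff, if_pos rfl, SetLike.mem_coe, N.one_mem, if_pos,
      Set.mem_univ, mul_one]
    ring
  · have hd := hdds a ha1
    rw [natcard_pairs] at hd
    rw [hd]
    simp only [Set.mem_singleton_iff, if_neg ha1, Set.mem_univ, if_pos, SetLike.mem_coe]
    by_cases haN : a ∈ N
    · simp only [if_pos haN]; push_cast; ring
    · simp only [if_neg haN]; push_cast; ring

lemma inv_image_closed (hinj : Function.Injective ι) (S : Set A) (hS : ∀ a ∈ S, a⁻¹ ∈ S) :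
    (ι '' S)⁻¹ = ι '' S := by
  ext g
  simp only [Set.mem_inv, Set.mem_image]
  constructor
  · rintro ⟨a, ha, hg⟩
    exact ⟨a⁻¹, hS a ha, by rw [map_inv, hg, inv_inv]⟩
  · rintro ⟨a, ha, hg⟩
    exact ⟨a⁻¹, hS a ha, by rw [map_inv, ← hg]⟩

lemma invol_inv_closed (S : Set G) (h : ∀ x ∈ S, x * x = 1) : S⁻¹ = S := by
  ext g
  rw [Set.mem_inv]
  constructor
  · intro hg
    have h2 := inv_eq_of_mul_eq_one_right (h g⁻¹ hg)
    rw [inv_inv] at h2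
    rw [h2]; exact hg
  · intro hg
    rw [inv_eq_of_mul_eq_one_right (h g hg)]; exact hg

lemma span_int_mul_closed {B : Type*} [Ring B] (s : Set B)
    (h : ∀ a ∈ s, ∀ c ∈ s, a * c ∈ Submodule.span ℤ s) :
    ∀ u ∈ Submodule.span ℤ s, ∀ v ∈ Submodule.span ℤ s, u * v ∈ Submodule.span ℤ s := by
  have key : ∀ a ∈ s, ∀ v ∈ Submodule.span ℤ s, a * v ∈ Submodule.span ℤ s := by
    intro a ha v hv
    induction hv using Submodule.span_induction with
    | mem c hc => exact h a ha c hc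
    | zero => rw [mul_zero]; exact zero_mem _
    | add p q hp hq ihp ihq => rw [mul_add]; exact add_mem ihp ihq
    | smul r p hp ih => rw [mul_smul_comm]; exact Submodule.smul_mem _ _ ih
  intro u hu v hv
  induction hu using Submodule.span_induction with
  | mem a ha => exact key a ha v hv
  | zero => rw [zero_mul]; exact zero_mem _
  | add p q hp hq ihp ihq => rw [add_mul]; exact add_mem ihp ihq
  | smul r p hp ih => rw [smul_mul_assoc]; exact Submodule.smul_mem _ _ ih

end Helpers

/-- for a divisible difference set `D` (with `m, n > 1`, satisfying the
intersection condition) relative to a proper nontrivial subgroup `N` of a finite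
abelian group `A`, the sets `{1}, X1 = N\{1}, X2 = A\N, X3 = Db, X4 = (A\D)b` in the
generalized dihedral group `G = Dih(A)` are inverse-closed and the `ℤ`-span of their
`underline`s in `MonoidAlgebra ℤ G` is closed under multiplication (an S-ring of
rank 5 over `G`). -/
theorem dihedral_sring_of_dds
    (A : Type*) [CommGroup A] [Fintype A] [DecidableEq A]
    (G : Type*) [Group G] [Fintype G]
    (ι : A →* G) (hinj : Function.Injective ι)
    (b : G) (hb2 : b * b = 1) (hb1 : b ≠ 1)
    (hbconj : ∀ a : A, b * ι a * b⁻¹ = ι a⁻¹)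
    (hbnot : b ∉ Set.range ι)
    (hcardG : Fintype.card G = 2 * Fintype.card A)
    (hdecomp : ∀ g : G, (∃ a, g = ι a) ∨ (∃ a, g = ι a * b))
    (N : Subgroup A) (hNtop : N ≠ ⊤) (hNbot : N ≠ ⊥)
    (D : Set A) (hDne : D.Nonempty)
    (m n k l1 l2 : ℕ) (hm : N.index = m) (hn : Nat.card N = n)
    (hk : Nat.card D = k) (hm1 : 1 < m) (hn1 : 1 < n)
    (hdds : ∀ g : A, g ≠ 1 →
      Nat.card {pr : A × A // pr.1 ∈ D ∧ pr.2 ∈ D ∧ pr.1 * pr.2⁻¹ = g}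
        = if g ∈ N then l1 else l2)
    (hic : ∃ μ : ℕ, ∀ g : A, Nat.card {x : A // x ∈ D ∧ x * g⁻¹ ∈ N} = μ)
    (X1 X2 X3 X4 : Set G)
    (hX1 : X1 = ι '' ((N : Set A) \ {1}))
    (hX2 : X2 = ι '' ((Set.univ : Set A) \ (N : Set A)))
    (hX3 : X3 = (fun a => ι a * b) '' D)
    (hX4 : X4 = (fun a => ι a * b) '' ((Set.univ : Set A) \ D)) :
    ({(1 : G)} : Set G)⁻¹ = {(1 : G)} ∧ X1⁻¹ = X1 ∧ X2⁻¹ = X2 ∧ X3⁻¹ = X3 ∧ X4⁻¹ = X4 ∧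
    (∀ u v : MonoidAlgebra ℤ G,
      u ∈ Submodule.span ℤ ({underline {(1 : G)}, underline X1, underline X2,
        underline X3, underline X4} : Set (MonoidAlgebra ℤ G)) →
      v ∈ Submodule.span ℤ ({underline {(1 : G)}, underline X1, underline X2,
        underline X3, underline X4} : Set (MonoidAlgebra ℤ G)) →
      u * v ∈ Submodule.span ℤ ({underline {(1 : G)}, underline X1, underline X2,
        underline X3, underline X4} : Set (MonoidAlgebra ℤ G))) := by
  obtain ⟨μ, hμ⟩ := hic
  have hbinv : b⁻¹ = b := inv_eq_of_mul_eq_one_right hb2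
  have hbconj' : ∀ a : A, b * ι a * b = ι a⁻¹ := fun a => by
    have h := hbconj a; rwa [hbinv] at h
  have hinvol : ∀ d : A, (ι d * b) * (ι d * b) = 1 := fun d => by
    rw [mul_assoc, ← mul_assoc b, hbconj' d, ← map_mul, mul_inv_cancel, map_one]
  -- inverse-closedness
  refine ⟨by simp, ?_, ?_, ?_, ?_, ?_⟩
  · rw [hX1]
    refine inv_image_closed ι hinj _ fun a ha => ⟨?_, ?_⟩
    · exact N.inv_mem ha.1
    · simpa using ha.2
  · rw [hX2]
    refine inv_image_closed ι hinj _ fun a ha => ⟨trivial, fun h => ha.2 ?_⟩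
    simpa using N.inv_mem h
  · rw [hX3]
    refine invol_inv_closed _ fun x hx => ?_
    obtain ⟨d, _, rfl⟩ := hx
    exact hinvol d
  · rw [hX4]
    refine invol_inv_closed _ fun x hx => ?_
    obtain ⟨d, _, rfl⟩ := hx
    exact hinvol d
  -- abbreviations
  set β : MonoidAlgebra ℤ G := MonoidAlgebra.single b 1 with hβdef
  set Dbar : MonoidAlgebra ℤ G := underline (ι '' D) with hDbar
  set Dibar : MonoidAlgebra ℤ G := underline (ι '' (Inv.inv '' D)) with hDibar
  set nb : MonoidAlgebra ℤ G := underline (ι '' (N : Set A)) with hnbdef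
  set ab : MonoidAlgebra ℤ G := underline (ι '' (Set.univ : Set A)) with habdef
  set x : MonoidAlgebra ℤ G := Dbar * β with hxdef
  set c : MonoidAlgebra ℤ G := ab * β with hcdef
  set q : ℕ := Nat.card (Set.univ : Set A) with hqdef
  -- cardinalities
  have hNn : Nat.card ((N : Set A) : Set A) = n := hn
  have hDin : Nat.card (Inv.inv '' D) = k := by
    rw [Nat.card_image_of_injective inv_injective, hk]
  -- counting hypotheses
  have hcntD : ∀ a : A, Nat.card {y : A // y ∈ D ∧ y * a⁻¹ ∈ N} = μ := hμ
  have hcntU : ∀ a : A,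
      Nat.card {y : A // y ∈ (Set.univ : Set A) ∧ y * a⁻¹ ∈ N} = n := fun a => by
    rw [Nat.card_congr (Equiv.subtypeEquivRight (q := fun y : A => y * a⁻¹ ∈ N)
      (fun y => by simp))]
    rw [natcard_filter, cnt_univ_N, hn]
  -- set facts
  have hinvN : Inv.inv '' (N : Set A) = (N : Set A) := by
    ext a
    constructor
    · rintro ⟨y, hy, rfl⟩; exact N.inv_mem hy
    · intro ha; exact ⟨a⁻¹, N.inv_mem ha, inv_inv a⟩
  have hinvU : Inv.inv '' (Set.univ : Set A) = (Set.univ : Set A) := by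
    ext a
    refine ⟨fun _ => trivial, fun _ => ⟨a⁻¹, trivial, inv_inv a⟩⟩
  -- beta facts
  have hβN : β * nb = nb * β := by
    rw [hβdef, hnbdef, beta_conj ι b hb2 hbconj, hinvN]
  have hβU : β * ab = ab * β := by
    rw [hβdef, habdef, beta_conj ι b hb2 hbconj, hinvU]
  have hβD : β * Dbar = Dibar * β := by
    rw [hβdef, hDbar, hDibar, beta_conj ι b hb2 hbconj]
  have hβ2 : β * β = 1 := beta_sq b hb2
  -- A-side products
  have pnn : nb * nb = (n : ℤ) • nb := by
    rw [hnbdef, N_mul_N ι hinj N, hNn]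
  have pna : nb * ab = (n : ℤ) • ab := by
    rw [hnbdef, habdef, mul_univ_right ι hinj, hNn]
  have pan : ab * nb = (n : ℤ) • ab := by
    rw [hnbdef, habdef, mul_N_right ι hinj N Set.univ n hcntU]
  have paa : ab * ab = (q : ℤ) • ab := by
    rw [habdef, mul_univ_right ι hinj, hqdef]
  have pda : Dbar * ab = (k : ℤ) • ab := by
    rw [hDbar, habdef, mul_univ_right ι hinj, hk]
  have pad : ab * Dbar = (k : ℤ) • ab := by
    rw [hDbar, habdef, univ_mul_left ι hinj, hk]
  have pai : ab * Dibar = (k : ℤ) • ab := by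
    rw [hDibar, habdef, univ_mul_left ι hinj, hDin]
  have pdn : Dbar * nb = (μ : ℤ) • ab := by
    rw [hDbar, hnbdef, habdef, mul_N_right ι hinj N D μ hcntD]
  have pnd : nb * Dbar = (μ : ℤ) • ab := by
    rw [hDbar, hnbdef, habdef, N_mul_left ι hinj N D μ hcntD]
  have hone : underline ({(1 : G)} : Set G) = 1 := underline_one
  have himg1 : ι '' ({1} : Set A) = ({(1 : G)} : Set G) := by
    rw [Set.image_singleton, map_one]
  have pdd : Dbar * Dibar = ((k : ℤ) - l1) • (1 : MonoidAlgebra ℤ G)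
      + (((l1 : ℤ) - l2) • nb + (l2 : ℤ) • ab) := by
    rw [hDbar, hDibar, D_mul_Dinv ι hinj N D l1 l2 hdds, himg1, hone, hk, hnbdef, habdef]
  -- G-side products for T = {1, nb, ab, x, c}
  have tnx : nb * x = (μ : ℤ) • c := by
    rw [hxdef, hcdef, ← mul_assoc, pnd, smul_mul_assoc]
  have txn : x * nb = (μ : ℤ) • c := by
    rw [hxdef, hcdef, mul_assoc, hβN, ← mul_assoc, pdn, smul_mul_assoc]
  have tnc : nb * c = (n : ℤ) • c := by
    rw [hcdef, ← mul_assoc, pna, smul_mul_assoc]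
  have tcn : c * nb = (n : ℤ) • c := by
    rw [hcdef, mul_assoc, hβN, ← mul_assoc, pan, smul_mul_assoc]
  have tax : ab * x = (k : ℤ) • c := by
    rw [hxdef, hcdef, ← mul_assoc, pad, smul_mul_assoc]
  have txa : x * ab = (k : ℤ) • c := by
    rw [hxdef, hcdef, mul_assoc, hβU, ← mul_assoc, pda, smul_mul_assoc]
  have tac : ab * c = (q : ℤ) • c := by
    rw [hcdef, ← mul_assoc, paa, smul_mul_assoc]
  have tca : c * ab = (q : ℤ) • c := by
    rw [hcdef, mul_assoc, hβU, ← mul_assoc, paa, smul_mul_assoc]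
  have txc : x * c = (k : ℤ) • ab := by
    rw [hxdef, hcdef]
    calc Dbar * β * (ab * β) = Dbar * ((β * ab) * β) := by rw [mul_assoc, mul_assoc]
    _ = Dbar * (ab * (β * β)) := by rw [hβU, mul_assoc]
    _ = Dbar * ab := by rw [hβ2, mul_one]
    _ = (k : ℤ) • ab := pda
  have tcx : c * x = (k : ℤ) • ab := by
    rw [hxdef, hcdef]
    calc ab * β * (Dbar * β) = ab * ((β * Dbar) * β) := by rw [mul_assoc, mul_assoc]
    _ = ab * (Dibar * (β * β)) := by rw [hβD, mul_assoc]
    _ = ab * Dibar := by rw [hβ2, mul_one]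
    _ = (k : ℤ) • ab := pai
  have tcc : c * c = (q : ℤ) • ab := by
    rw [hcdef]
    calc ab * β * (ab * β) = ab * ((β * ab) * β) := by rw [mul_assoc, mul_assoc]
    _ = ab * (ab * (β * β)) := by rw [hβU, mul_assoc]
    _ = ab * ab := by rw [hβ2, mul_one]
    _ = (q : ℤ) • ab := paa
  have txx : x * x = ((k : ℤ) - l1) • (1 : MonoidAlgebra ℤ G)
      + (((l1 : ℤ) - l2) • nb + (l2 : ℤ) • ab) := by
    rw [hxdef]
    calc Dbar * β * (Dbar * β) = Dbar * ((β * Dbar) * β) := by rw [mul_assoc, mul_assoc]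
    _ = Dbar * (Dibar * (β * β)) := by rw [hβD, mul_assoc]
    _ = Dbar * Dibar := by rw [hβ2, mul_one]
    _ = _ := pdd
  -- decompositions of generators
  have hu3 : underline X3 = x := by
    rw [hX3, hxdef, hDbar, hβdef, underline_mul_single', Set.image_image]
  have hnb_split : nb = underline ({(1 : G)} : Set G) + underline X1 := by
    have hset : ι '' (N : Set A) = ι '' ({1} : Set A) ∪ ι '' ((N : Set A) \ {1}) := by
      rw [← Set.image_union, Set.union_diff_cancel (by simp [Set.singleton_subset_iff, N.one_mem])]
    rw [hnbdef, hset, underline_union_disjoint _ _ ((Set.disjoint_image_iff hinj).mpr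
      (by simp [Set.disjoint_left]))]
    rw [himg1, hX1]
  have hab_split : ab = nb + underline X2 := by
    have hset : ι '' (Set.univ : Set A)
        = ι '' (N : Set A) ∪ ι '' ((Set.univ : Set A) \ (N : Set A)) := by
      rw [← Set.image_union, Set.union_diff_cancel (Set.subset_univ _)]
    rw [habdef, hset, underline_union_disjoint _ _ ((Set.disjoint_image_iff hinj).mpr
      (by simp [Set.disjoint_left]))]
    rw [hnbdef, hX2]
  have hc_split : c = underline X3 + underline X4 := by
    have hιb : Function.Injective (fun a : A => ι a * b) := fun a1 a2 h => by
      simp only [mul_left_inj] at h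
      exact hinj h
    have hset : (fun a : A => ι a * b) '' (Set.univ : Set A)
        = (fun a : A => ι a * b) '' D ∪ (fun a : A => ι a * b) '' ((Set.univ : Set A) \ D) := by
      rw [← Set.image_union, Set.union_diff_cancel (Set.subset_univ _)]
    have hcu : c = underline ((fun a : A => ι a * b) '' (Set.univ : Set A)) := by
      rw [hcdef, habdef, hβdef, underline_mul_single', Set.image_image]
    rw [hcu, hset, underline_union_disjoint _ _ ((Set.disjoint_image_iff hιb).mpr
      (by simp [Set.disjoint_left]))]
    rw [hX3, hX4]
  -- span equality
  set S : Set (MonoidAlgebra ℤ G) := {underline {(1 : G)}, underline X1, underline X2,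
    underline X3, underline X4} with hSdef
  set T : Set (MonoidAlgebra ℤ G) := {1, nb, ab, x, c} with hTdef
  have m1T : (1 : MonoidAlgebra ℤ G) ∈ T := by rw [hTdef]; left; rfl
  have mnbT : nb ∈ T := by rw [hTdef]; right; left; rfl
  have mabT : ab ∈ T := by rw [hTdef]; right; right; left; rfl
  have mxT : x ∈ T := by rw [hTdef]; right; right; right; left; rfl
  have mcT : c ∈ T := by rw [hTdef]; right; right; right; right; rfl
  have hspan : Submodule.span ℤ S = Submodule.span ℤ T := by
    apply le_antisymm
    · rw [Submodule.span_le]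
      intro z hz
      rw [hSdef] at hz
      rcases hz with rfl | rfl | rfl | rfl | hz
      · rw [hone]; exact Submodule.subset_span m1T
      · have : underline X1 = nb - 1 := by rw [hnb_split, hone]; abel
        rw [this]
        exact sub_mem (Submodule.subset_span mnbT) (Submodule.subset_span m1T)
      · have : underline X2 = ab - nb := by rw [hab_split]; abel
        rw [this]
        exact sub_mem (Submodule.subset_span mabT) (Submodule.subset_span mnbT)
      · rw [hu3]; exact Submodule.subset_span mxT
      · rw [Set.mem_singleton_iff] at hz
        subst hz
        have : underline X4 = c - x := by rw [hc_split, hu3]; abel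
        rw [this]
        exact sub_mem (Submodule.subset_span mcT) (Submodule.subset_span mxT)
    · rw [Submodule.span_le]
      have m0S : underline ({(1 : G)} : Set G) ∈ Submodule.span ℤ S :=
        Submodule.subset_span (by rw [hSdef]; left; rfl)
      have m1S : underline X1 ∈ Submodule.span ℤ S :=
        Submodule.subset_span (by rw [hSdef]; right; left; rfl)
      have m2S : underline X2 ∈ Submodule.span ℤ S :=
        Submodule.subset_span (by rw [hSdef]; right; right; left; rfl)
      have m3S : underline X3 ∈ Submodule.span ℤ S :=
        Submodule.subset_span (by rw [hSdef]; right; right; right; left; rfl)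
      have m4S : underline X4 ∈ Submodule.span ℤ S :=
        Submodule.subset_span (by rw [hSdef]; right; right; right; right; rfl)
      intro z hz
      rw [hTdef] at hz
      rcases hz with rfl | rfl | rfl | rfl | hz
      · rw [← hone]; exact m0S
      · rw [hnb_split]; exact add_mem m0S m1S
      · rw [hab_split, hnb_split]; exact add_mem (add_mem m0S m1S) m2S
      · rw [← hu3]; exact m3S
      · rw [Set.mem_singleton_iff] at hz
        subst hz
        rw [hc_split]; exact add_mem m3S m4S
  -- closure of span T under multiplication
  have hTclosed : ∀ p ∈ T, ∀ r ∈ T, p * r ∈ Submodule.span ℤ T := by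
    have s1 := Submodule.subset_span (R := ℤ) m1T
    have snb := Submodule.subset_span (R := ℤ) mnbT
    have sab := Submodule.subset_span (R := ℤ) mabT
    have sx := Submodule.subset_span (R := ℤ) mxT
    have sc := Submodule.subset_span (R := ℤ) mcT
    intro p hp r hr
    rw [hTdef, Set.mem_insert_iff, Set.mem_insert_iff, Set.mem_insert_iff,
      Set.mem_insert_iff, Set.mem_singleton_iff] at hp hr
    rcases hp with rfl | rfl | rfl | rfl | rfl <;>
      rcases hr with rfl | rfl | rfl | rfl | rfl <;>
      first
        | (rw [one_mul]; assumption)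
        | (rw [mul_one]; assumption)
        | (rw [pnn]; exact Submodule.smul_mem _ _ snb)
        | (rw [pna]; exact Submodule.smul_mem _ _ sab)
        | (rw [pan]; exact Submodule.smul_mem _ _ sab)
        | (rw [paa]; exact Submodule.smul_mem _ _ sab)
        | (rw [tnx]; exact Submodule.smul_mem _ _ sc)
        | (rw [txn]; exact Submodule.smul_mem _ _ sc)
        | (rw [tnc]; exact Submodule.smul_mem _ _ sc)
        | (rw [tcn]; exact Submodule.smul_mem _ _ sc)
        | (rw [tax]; exact Submodule.smul_mem _ _ sc)
        | (rw [txa]; exact Submodule.smul_mem _ _ sc)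
        | (rw [tac]; exact Submodule.smul_mem _ _ sc)
        | (rw [tca]; exact Submodule.smul_mem _ _ sc)
        | (rw [txc]; exact Submodule.smul_mem _ _ sab)
        | (rw [tcx]; exact Submodule.smul_mem _ _ sab)
        | (rw [tcc]; exact Submodule.smul_mem _ _ sab)
        | (rw [txx]; exact add_mem (Submodule.smul_mem _ _ s1)
            (add_mem (Submodule.smul_mem _ _ snb) (Submodule.smul_mem _ _ sab)))
  intro u v hu hv
  rw [hspan] at hu hv ⊢
  exact span_int_mul_closed T hTclosed u hu v hv
end

section
/- Let m, n, k be natural numbers with m ≥ 2, n ≥ 2 and 1 ≤ k ≤ mn−1. Then the conjunction of (as rational numbers) 1/k + 1/(mn−k) = 1/(n−1) − 1/n and (k = 2n or mn − k = 2n) holds if and only if m = 4, n = 2 and k = 4. -/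
/-- for natural numbers `m ≥ 2`, `n ≥ 2`, `1 ≤ k ≤ mn − 1`, the
conjunction of `1/k + 1/(mn−k) = 1/(n−1) − 1/n` (in `ℚ`) and
(`k = 2n` or `mn − k = 2n`) holds iff `(m, n, k) = (4, 2, 4)`. -/
theorem rds_424_criterion (m n k : ℕ) (hm : 2 ≤ m) (hn : 2 ≤ n)
    (hk1 : 1 ≤ k) (hk2 : k ≤ m * n - 1) :
    ((1 / (k : ℚ) + 1 / ((m * n - k : ℕ) : ℚ)
        = 1 / ((n : ℚ) - 1) - 1 / (n : ℚ)) ∧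
      (k = 2 * n ∨ m * n - k = 2 * n)) ↔ (m = 4 ∧ n = 2 ∧ k = 4) := by
  have hmn : 4 ≤ m * n := by
    calc (4:ℕ) = 2 * 2 := rfl
    _ ≤ m * n := Nat.mul_le_mul hm hn
  have hkn : k < m * n := by omega
  constructor
  · rintro ⟨heq, hcase⟩
    have hcast : ((m * n - k : ℕ) : ℚ) = (m : ℚ) * n - k := by
      push_cast [hkn.le]; ring
    rw [hcast] at heq
    have hk0 : (k : ℚ) ≠ 0 := by positivity
    have hb0 : (m : ℚ) * n - k ≠ 0 := by
      have : (k : ℚ) < (m : ℚ) * n := by exact_mod_cast hkn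
      linarith
    have hn0 : (n : ℚ) ≠ 0 := by positivity
    have hn1 : (n : ℚ) - 1 ≠ 0 := by
      have : (2 : ℚ) ≤ n := by exact_mod_cast hn
      linarith
    field_simp at heq
    -- derive the key nat equation from either case
    have key : 3 * (m * n * n) = m * n * n * n + 4 * (n * n) := by
      have hQ : (3 : ℚ) * (m * n * n) = m * n * n * n + 4 * (n * n) := by
        have h3 : (m : ℚ) * n * ((n - 1) * n) = 2 * n * (m * n - 2 * n) := by
          rcases hcase with h | h
          · have hkq : (k : ℚ) = 2 * n := by exact_mod_cast h
            rw [hkq] at heq; linear_combination heq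
          · have hkq : (m : ℚ) * n - k = 2 * n := by
              rw [← hcast]; exact_mod_cast h
            linear_combination heq + ((k : ℚ) - 2 * n) * hkq
        linear_combination -h3
      exact_mod_cast hQ
    have hn3 : n < 3 := by
      by_contra h
      push_neg at h
      have h1 : m * n * n * 3 ≤ m * n * n * n := Nat.mul_le_mul_left _ h
      have h2 : 1 ≤ n * n := Nat.one_le_iff_ne_zero.mpr (by positivity)
      linarith
    have hn2 : n = 2 := by omega
    subst hn2
    have hm4 : m = 4 := by omega
    subst hm4
    refine ⟨rfl, rfl, ?_⟩
    omega
  · rintro ⟨rfl, rfl, rfl⟩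
    norm_num
end
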